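/- arXiv:2408.14092 — 7 statements merged into one kernel-verified Lean document; each statement's English description precedes it below -/
import Mathlib

section
/- Let n ≥ 0 and let E, F be disjoint nonempty compact subsets of ℂ. Suppose r* = p/q is a rational function of degree at most n with q nonvanishing on E ∪ F, min_{z∈F} |r*(z)| = 1, and sup_{z∈E} |r*(z)| = σ_n, where 0 < σ_n < 1 (so r* solves Problem Z3). Define r̂(z) = ((1−σ_n)/(1+σ_n)) · (r*(z) − √σ_n)/(r*(z) + √σ_n). Then r*(z) + √σ_n ≠ 0 for every z ∈ E ∪ F, r̂ is a rational function of degree at most n, and sup_{z∈E∪F} |r̂(z) − sign_{E/F}(z)| = 2√σ_n/(1+σ_n) = τ_n; that is, r̂ solves Problem Z4. -/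
open Polynomial Set

private lemma zolo_sq_le {A B : ℝ} (hA : 0 ≤ A) (hB : 0 ≤ B) (h : A^2 ≤ B^2) : A ≤ B := by
  nlinarith

private lemma zolo_normsq (w : ℂ) : ‖w‖^2 = w.re^2 + w.im^2 := by
  rw [Complex.sq_norm, Complex.normSq_apply]; ring

private lemma zolo_degree_C_mul {c : ℂ} {q : ℂ[X]} {n : ℕ} (h : q.degree ≤ n) :
    (C c * q).degree ≤ n := by
  refine (degree_mul_le _ _).trans ?_
  refine le_trans (add_le_add degree_C_le h) ?_
  simp

private lemma zolo_boundE {a : ℝ} (ha0 : 0 < a) (ha1 : a < 1) {w : ℂ} (hw : ‖w‖ ≤ a^2) :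
    ‖w + ((a^3 : ℝ) : ℂ)‖ ≤ a * ‖w + ((a:ℝ) : ℂ)‖ := by
  have h2 : w.re^2 + w.im^2 ≤ a^4 := by
    have h := zolo_normsq w
    nlinarith [norm_nonneg w]
  apply zolo_sq_le (norm_nonneg _) (by positivity)
  rw [mul_pow, zolo_normsq, zolo_normsq]
  simp only [Complex.add_re, Complex.add_im, Complex.ofReal_re, Complex.ofReal_im, add_zero]
  nlinarith [mul_nonneg (by nlinarith : (0:ℝ) ≤ 1 - a^2)
    (by nlinarith : (0:ℝ) ≤ a^4 - (w.re^2 + w.im^2))]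

private lemma zolo_boundF {a : ℝ} (ha0 : 0 < a) (ha1 : a < 1) {w : ℂ} (hw : 1 ≤ ‖w‖) :
    ‖((a:ℝ):ℂ) * w + 1‖ ≤ ‖w + ((a:ℝ):ℂ)‖ := by
  have h2 : 1 ≤ w.re^2 + w.im^2 := by
    have h := zolo_normsq w
    nlinarith [norm_nonneg w]
  apply zolo_sq_le (norm_nonneg _) (norm_nonneg _)
  rw [zolo_normsq, zolo_normsq]
  simp only [Complex.add_re, Complex.add_im, Complex.mul_re, Complex.mul_im,
    Complex.ofReal_re, Complex.ofReal_im, Complex.one_re, Complex.one_im, add_zero]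
  nlinarith [mul_nonneg (by nlinarith : (0:ℝ) ≤ 1 - a^2)
    (by nlinarith : (0:ℝ) ≤ w.re^2 + w.im^2 - 1)]

private lemma zolo_eqF {a : ℝ} (ha0 : 0 < a) {w : ℂ} (hw : ‖w‖ = 1) :
    ‖((a:ℝ):ℂ) * w + 1‖ = ‖w + ((a:ℝ):ℂ)‖ := by
  have h2 : w.re^2 + w.im^2 = 1 := by
    have h := zolo_normsq w
    nlinarith
  have e1 : ‖((a:ℝ):ℂ) * w + 1‖^2 = ‖w + ((a:ℝ):ℂ)‖^2 := by
    rw [zolo_normsq, zolo_normsq]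
    simp only [Complex.add_re, Complex.add_im, Complex.mul_re, Complex.mul_im,
      Complex.ofReal_re, Complex.ofReal_im, Complex.one_re, Complex.one_im, add_zero]
    linear_combination (a^2 - 1) * h2
  exact le_antisymm (zolo_sq_le (norm_nonneg _) (norm_nonneg _) e1.le)
    (zolo_sq_le (norm_nonneg _) (norm_nonneg _) e1.ge)


/-- The minimal value `σ_n(E,F)` of the third Zolotarev problem (the ratio problem):
the infimum of `sup_{z ∈ E} |p(z)/q(z)|` over all pairs of complex polynomials `p, q`
of degree at most `n` such that `q` has no zeros in `E` and `|p(z)| ≥ |q(z)|` on `F`. -/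
noncomputable def zoloSigma (n : ℕ) (E F : Set ℂ) : ℝ :=
  sInf {s : ℝ | ∃ p q : Polynomial ℂ, p.degree ≤ n ∧ q.degree ≤ n ∧
    (∀ z ∈ E, q.eval z ≠ 0) ∧ (∀ z ∈ F, ‖q.eval z‖ ≤ ‖p.eval z‖) ∧
    s = sSup ((fun z => ‖p.eval z / q.eval z‖) '' E)}

open scoped Classical in
/-- The sign function relative to `E` and `F`: equal to `-1` on `E` and `+1` elsewhere
(in particular `+1` on `F`). -/
noncomputable def signEF (E : Set ℂ) (z : ℂ) : ℂ := if z ∈ E then -1 else 1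

/-- The minimal value `τ_n(E,F)` of the fourth Zolotarev problem (the sign problem). -/
noncomputable def zoloTau (n : ℕ) (E F : Set ℂ) : ℝ :=
  sInf {t : ℝ | ∃ p q : Polynomial ℂ, p.degree ≤ n ∧ q.degree ≤ n ∧
    (∀ z ∈ E ∪ F, q.eval z ≠ 0) ∧
    t = sSup ((fun z => ‖p.eval z / q.eval z - signEF E z‖) '' (E ∪ F))}

set_option maxHeartbeats 1000000 in
/-- If `r* = p/q` solves the third Zolotarev problem (minimum modulus `1` on `F`, maximum
modulus `σ_n` on `E` with `0 < σ_n < 1`), then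
`r̂ = ((1-σ_n)/(1+σ_n)) (r* - √σ_n)/(r* + √σ_n)` is a well-defined rational function of
degree at most `n` that solves the fourth Zolotarev problem, with
`sup_{z ∈ E ∪ F} |r̂(z) - sign_{E/F}(z)| = 2√σ_n/(1+σ_n) = τ_n`. -/
theorem Z3_solution_gives_Z4_solution (n : ℕ) (E F : Set ℂ)
    (hE : IsCompact E) (hF : IsCompact F)
    (hEne : E.Nonempty) (hFne : F.Nonempty)
    (hdisj : Disjoint E F)
    (p q : Polynomial ℂ) (hp : p.degree ≤ n) (hq : q.degree ≤ n)
    (hq0 : ∀ z ∈ E ∪ F, q.eval z ≠ 0)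
    (r : ℂ → ℂ) (hr : ∀ z, r z = p.eval z / q.eval z)
    (hmin : IsLeast ((fun z => ‖r z‖) '' F) 1)
    (σ : ℝ) (hσ : σ = zoloSigma n E F)
    (hsup : sSup ((fun z => ‖r z‖) '' E) = σ)
    (hσ0 : 0 < σ) (hσ1 : σ < 1)
    (rhat : ℂ → ℂ)
    (hrhat : ∀ z, rhat z =
      (((1 - σ) / (1 + σ) : ℝ) : ℂ) * (r z - (Real.sqrt σ : ℂ)) / (r z + (Real.sqrt σ : ℂ))) :
    (∀ z ∈ E ∪ F, r z + (Real.sqrt σ : ℂ) ≠ 0) ∧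
    (∃ p' q' : Polynomial ℂ, p'.degree ≤ n ∧ q'.degree ≤ n ∧
      (∀ z ∈ E ∪ F, q'.eval z ≠ 0) ∧
      (∀ z ∈ E ∪ F, rhat z = p'.eval z / q'.eval z)) ∧
    sSup ((fun z => ‖rhat z - signEF E z‖) '' (E ∪ F)) = 2 * Real.sqrt σ / (1 + σ) ∧
    2 * Real.sqrt σ / (1 + σ) = zoloTau n E F := by
  obtain ⟨z₀, hz₀F, hz₀⟩ := hmin.1
  simp only at hz₀
  set a := Real.sqrt σ with ha_def
  have ha2 : a^2 = σ := by rw [ha_def]; exact Real.sq_sqrt hσ0.le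
  have ha0 : 0 < a := by rw [ha_def]; exact Real.sqrt_pos.mpr hσ0
  have ha1 : a < 1 := by nlinarith
  have hs1 : (0:ℝ) < 1 + σ := by linarith
  set lam : ℝ := (1 - σ) / (1 + σ) with hlam_def
  set T : ℝ := 2 * a / (1 + σ) with hT_def
  have hlam0 : 0 < lam := div_pos (by linarith) hs1
  have hlam1 : lam < 1 := by rw [hlam_def, div_lt_one hs1]; linarith
  have hT0 : 0 < T := by rw [hT_def]; positivity
  have hT1 : T < 1 := by rw [hT_def, div_lt_one hs1]; nlinarith
  have hσc : ((σ:ℝ):ℂ) = ((a:ℝ):ℂ)^2 := by rw [← ha2]; push_cast; ring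
  have h1σc : ((1:ℂ) + ((σ:ℝ):ℂ)) ≠ 0 := by
    rw [show ((1:ℂ) + ((σ:ℝ):ℂ)) = (((1+σ:ℝ)):ℂ) by push_cast; ring]
    exact Complex.ofReal_ne_zero.mpr hs1.ne'
  -- pointwise bounds on r
  have hrcont : ContinuousOn (fun z => ‖r z‖) E := by
    have h1 : ContinuousOn (fun z => ‖p.eval z / q.eval z‖) E :=
      (p.continuous.continuousOn.div q.continuous.continuousOn
        (fun z hz => hq0 z (Or.inl hz))).norm
    exact h1.congr fun z _ => by rw [hr z]
  have hrE : ∀ z ∈ E, ‖r z‖ ≤ σ := fun z hz =>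
    hsup ▸ le_csSup (hE.bddAbove_image hrcont) ⟨z, hz, rfl⟩
  have hrF : ∀ z ∈ F, 1 ≤ ‖r z‖ := fun z hz => hmin.2 ⟨z, hz, rfl⟩
  -- Part 1
  have part1 : ∀ z ∈ E ∪ F, r z + ((a:ℝ):ℂ) ≠ 0 := by
    intro z hz h0
    have hz' : r z = -((a:ℝ):ℂ) := eq_neg_of_add_eq_zero_left h0
    have hn : ‖r z‖ = a := by
      rw [hz', norm_neg, Complex.norm_real, Real.norm_eq_abs, abs_of_pos ha0]
    rcases hz with hz | hz
    · have := hrE z hz; rw [hn] at this; nlinarith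
    · have := hrF z hz; rw [hn] at this; linarith
  -- Part 2
  have hpeval : ∀ z ∈ E ∪ F, p.eval z = r z * q.eval z := by
    intro z hz; rw [hr z]; exact (div_mul_cancel₀ _ (hq0 z hz)).symm
  set p' : ℂ[X] := C ((lam:ℝ):ℂ) * (p - C ((a:ℝ):ℂ) * q) with hp'_def
  set q' : ℂ[X] := p + C ((a:ℝ):ℂ) * q with hq'_def
  have hdegq' : q'.degree ≤ n :=
    (degree_add_le _ _).trans (max_le hp (zolo_degree_C_mul hq))
  have hdegp' : p'.degree ≤ n :=
    zolo_degree_C_mul ((degree_sub_le _ _).trans (max_le hp (zolo_degree_C_mul hq)))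
  have hq'eval : ∀ z ∈ E ∪ F, q'.eval z = q.eval z * (r z + ((a:ℝ):ℂ)) := by
    intro z hz
    rw [hq'_def]
    simp only [eval_add, eval_mul, eval_C]
    rw [hpeval z hz]; ring
  have hp'eval : ∀ z ∈ E ∪ F, p'.eval z = ((lam:ℝ):ℂ) * (q.eval z * (r z - ((a:ℝ):ℂ))) := by
    intro z hz
    rw [hp'_def]
    simp only [eval_mul, eval_sub, eval_C]
    rw [hpeval z hz]; ring
  have hq'0 : ∀ z ∈ E ∪ F, q'.eval z ≠ 0 := by
    intro z hz
    rw [hq'eval z hz]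
    exact mul_ne_zero (hq0 z hz) (part1 z hz)
  have hratio : ∀ z ∈ E ∪ F, rhat z = p'.eval z / q'.eval z := by
    intro z hz
    rw [hrhat z, hp'eval z hz, hq'eval z hz]
    have h1 := hq0 z hz
    have h2 := part1 z hz
    field_simp
  -- sign function values
  have hsignE : ∀ z ∈ E, signEF E z = -1 := by
    intro z hz; simp [signEF, hz]
  have hsignF : ∀ z ∈ F, signEF E z = 1 := by
    intro z hz
    have : z ∉ E := fun h => disjoint_left.mp hdisj h hz
    simp [signEF, this]
  -- factorization identities
  have hfactE : ∀ w : ℂ, ((lam:ℝ):ℂ) * (w - ((a:ℝ):ℂ)) + (w + ((a:ℝ):ℂ))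
      = (((2/(1+σ):ℝ)):ℂ) * (w + ((a^3:ℝ):ℂ)) := by
    intro w
    rw [hlam_def]
    push_cast
    rw [show ((σ:ℝ):ℂ) = ((a:ℝ):ℂ)^2 from hσc] 
    have h2 : (1:ℂ) + ((a:ℝ):ℂ)^2 ≠ 0 := by rw [← hσc]; exact h1σc
    field_simp
    ring
  have hfactF : ∀ w : ℂ, ((lam:ℝ):ℂ) * (w - ((a:ℝ):ℂ)) - (w + ((a:ℝ):ℂ))
      = ((-(2*a/(1+σ)):ℝ):ℂ) * (((a:ℝ):ℂ) * w + 1) := by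
    intro w
    rw [hlam_def]
    push_cast
    rw [show ((σ:ℝ):ℂ) = ((a:ℝ):ℂ)^2 from hσc]
    have h2 : (1:ℂ) + ((a:ℝ):ℂ)^2 ≠ 0 := by rw [← hσc]; exact h1σc
    field_simp
    ring
  -- Part 3 : pointwise bounds
  have hvalE : ∀ z ∈ E, ‖rhat z - signEF E z‖ ≤ T := by
    intro z hz
    have hwa := part1 z (Or.inl hz)
    have hpos : (0:ℝ) < ‖r z + ((a:ℝ):ℂ)‖ := norm_pos_iff.mpr hwa
    rw [hsignE z hz, hrhat z, sub_neg_eq_add]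
    have h1 : ((lam:ℝ):ℂ) * (r z - ((a:ℝ):ℂ)) / (r z + ((a:ℝ):ℂ)) + 1
        = (((lam:ℝ):ℂ) * (r z - ((a:ℝ):ℂ)) + (r z + ((a:ℝ):ℂ))) / (r z + ((a:ℝ):ℂ)) := by
      field_simp
    rw [h1, hfactE (r z), norm_div, norm_mul, Complex.norm_real, Real.norm_eq_abs,
      abs_of_pos (by positivity : (0:ℝ) < 2/(1+σ))]
    have hb : ‖r z + ((a^3:ℝ):ℂ)‖ ≤ a * ‖r z + ((a:ℝ):ℂ)‖ :=
      zolo_boundE ha0 ha1 (by rw [ha2]; exact hrE z hz)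
    have h3 : 2/(1+σ) * (a * ‖r z + ((a:ℝ):ℂ)‖) / ‖r z + ((a:ℝ):ℂ)‖ = T := by
      rw [hT_def, mul_div_assoc, mul_div_cancel_right₀ _ hpos.ne']; ring
    calc 2/(1+σ) * ‖r z + ((a^3:ℝ):ℂ)‖ / ‖r z + ((a:ℝ):ℂ)‖
        ≤ 2/(1+σ) * (a * ‖r z + ((a:ℝ):ℂ)‖) / ‖r z + ((a:ℝ):ℂ)‖ := by gcongr
      _ = T := h3
  have hvalF : ∀ z ∈ F, ‖rhat z - signEF E z‖
      = T * (‖((a:ℝ):ℂ) * r z + 1‖ / ‖r z + ((a:ℝ):ℂ)‖) := by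
    intro z hz
    have hwa := part1 z (Or.inr hz)
    rw [hsignF z hz, hrhat z]
    have h1 : ((lam:ℝ):ℂ) * (r z - ((a:ℝ):ℂ)) / (r z + ((a:ℝ):ℂ)) - 1
        = (((lam:ℝ):ℂ) * (r z - ((a:ℝ):ℂ)) - (r z + ((a:ℝ):ℂ))) / (r z + ((a:ℝ):ℂ)) := by
      field_simp
    rw [h1, hfactF (r z), norm_div, norm_mul, Complex.norm_real, Real.norm_eq_abs,
      abs_neg, abs_of_pos (by positivity : (0:ℝ) < 2*a/(1+σ))]
    rw [hT_def]
    ring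
  have hptF : ∀ z ∈ F, ‖rhat z - signEF E z‖ ≤ T := by
    intro z hz
    rw [hvalF z hz]
    have hwa := part1 z (Or.inr hz)
    have hpos : (0:ℝ) < ‖r z + ((a:ℝ):ℂ)‖ := norm_pos_iff.mpr hwa
    have hb := zolo_boundF ha0 ha1 (hrF z hz)
    have : ‖((a:ℝ):ℂ) * r z + 1‖ / ‖r z + ((a:ℝ):ℂ)‖ ≤ 1 := by
      rw [div_le_one hpos]; exact hb
    nlinarith
  have hpt : ∀ z ∈ E ∪ F, ‖rhat z - signEF E z‖ ≤ T := by
    intro z hz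
    rcases hz with hz | hz
    · exact hvalE z hz
    · exact hptF z hz
  have heq0 : ‖rhat z₀ - signEF E z₀‖ = T := by
    rw [hvalF z₀ hz₀F, zolo_eqF ha0 hz₀,
      div_self (norm_pos_iff.mpr (part1 z₀ (Or.inr hz₀F))).ne', mul_one]
  have h3sup : sSup ((fun z => ‖rhat z - signEF E z‖) '' (E ∪ F)) = T := by
    apply le_antisymm
    · exact Real.sSup_le (by rintro x ⟨z, hz, rfl⟩; exact hpt z hz) hT0.le
    · exact le_csSup ⟨T, by rintro x ⟨z, hz, rfl⟩; exact hpt z hz⟩ ⟨z₀, Or.inr hz₀F, heq0⟩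
  -- Part 4
  -- membership of T in the tau set
  have hmemT : T ∈ {t : ℝ | ∃ p₂ q₂ : Polynomial ℂ, p₂.degree ≤ n ∧ q₂.degree ≤ n ∧
      (∀ z ∈ E ∪ F, q₂.eval z ≠ 0) ∧
      t = sSup ((fun z => ‖p₂.eval z / q₂.eval z - signEF E z‖) '' (E ∪ F))} := by
    refine ⟨p', q', hdegp', hdegq', hq'0, ?_⟩
    have himeq : (fun z => ‖p'.eval z / q'.eval z - signEF E z‖) '' (E ∪ F)
        = (fun z => ‖rhat z - signEF E z‖) '' (E ∪ F) :=
      image_congr fun z hz => by rw [← hratio z hz]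
    rw [himeq, h3sup]
  -- key algebraic identities
  have h12 : (1 + a^2) ≠ 0 := by positivity
  have key1 : ∀ x y : ℝ, a^2*((lam+x)^2+y^2) - ((lam-x)^2+y^2)
      = (1-a^2)*(T^2 - ((x-1)^2+y^2)) := by
    intro x y
    rw [hlam_def, hT_def, ← ha2]
    field_simp
    ring
  have key2 : ∀ x y : ℝ, a^4*((lam-x)^2+y^2) - a^2*((lam+x)^2+y^2)
      = a^2*(1-a^2)*(T^2 - ((x+1)^2+y^2)) := by
    intro x y
    rw [hlam_def, hT_def, ← ha2]
    field_simp
    ring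
  have keyF : ∀ w : ℂ, ‖w - 1‖ ≤ T → ‖((lam:ℝ):ℂ) - w‖ ≤ a * ‖((lam:ℝ):ℂ) + w‖ := by
    intro w hw
    apply zolo_sq_le (norm_nonneg _) (by positivity)
    have hw2 : (w.re - 1)^2 + w.im^2 ≤ T^2 := by
      have h := pow_le_pow_left₀ (norm_nonneg _) hw 2
      rw [zolo_normsq] at h
      simp only [Complex.sub_re, Complex.sub_im, Complex.one_re, Complex.one_im,
        sub_zero] at h
      exact h
    rw [mul_pow, zolo_normsq, zolo_normsq]
    simp only [Complex.add_re, Complex.add_im, Complex.sub_re, Complex.sub_im,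
      Complex.ofReal_re, Complex.ofReal_im, zero_sub, zero_add]
    have h2 : 0 ≤ (1-a^2)*(T^2 - ((w.re-1)^2+w.im^2)) :=
      mul_nonneg (by nlinarith) (by linarith)
    nlinarith [key1 w.re w.im]
  -- the lower bound for the tau set
  have hlb : ∀ t ∈ {t : ℝ | ∃ p₂ q₂ : Polynomial ℂ, p₂.degree ≤ n ∧ q₂.degree ≤ n ∧
      (∀ z ∈ E ∪ F, q₂.eval z ≠ 0) ∧
      t = sSup ((fun z => ‖p₂.eval z / q₂.eval z - signEF E z‖) '' (E ∪ F))}, T ≤ t := by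
    rintro t ⟨p₂, q₂, hp₂, hq₂, hq₂0, ht⟩
    by_contra hcon
    push_neg at hcon
    set w : ℂ → ℂ := fun z => p₂.eval z / q₂.eval z with hw_def
    -- boundedness, hence pointwise bounds
    have hcontq : ContinuousOn (fun z => ‖w z‖) (E ∪ F) :=
      (p₂.continuous.continuousOn.div q₂.continuous.continuousOn hq₂0).norm
    obtain ⟨M, hM⟩ := (hE.union hF).bddAbove_image hcontq
    have hbdd : BddAbove ((fun z => ‖w z - signEF E z‖) '' (E ∪ F)) := by
      refine ⟨M + 1, ?_⟩
      rintro x ⟨z, hz, rfl⟩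
      have hs1' : ‖signEF E z‖ = 1 := by unfold signEF; split <;> simp
      have h2 : ‖w z‖ ≤ M := hM ⟨z, hz, rfl⟩
      calc ‖w z - signEF E z‖ ≤ ‖w z‖ + ‖signEF E z‖ := norm_sub_le _ _
        _ ≤ M + 1 := by rw [hs1']; linarith
    have hpt2 : ∀ z ∈ E ∪ F, ‖w z - signEF E z‖ ≤ t := by
      intro z hz
      rw [ht]
      exact le_csSup hbdd ⟨z, hz, rfl⟩
    obtain ⟨z₁, hz₁⟩ := hEne
    have ht0 : 0 ≤ t := le_trans (norm_nonneg _) (hpt2 z₁ (Or.inl hz₁))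
    have hE2 : ∀ z ∈ E, ‖w z + 1‖ ≤ t := by
      intro z hz
      have h := hpt2 z (Or.inl hz)
      rwa [hsignE z hz, sub_neg_eq_add] at h
    have hF2 : ∀ z ∈ F, ‖w z - 1‖ ≤ t := by
      intro z hz
      have h := hpt2 z (Or.inr hz)
      rwa [hsignF z hz] at h
    -- strict quantities
    set δ : ℝ := a^2*(1-a^2)*(T^2 - t^2) with hδ_def
    have hδ0 : 0 < δ := by
      rw [hδ_def]
      apply mul_pos (mul_pos (by positivity) (by nlinarith))
      nlinarith
    set m : ℝ := a^4 - δ/(lam+2)^2 with hm_def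
    have hmlt : m < σ^2 := by
      rw [hm_def]
      have hd : 0 < δ/(lam+2)^2 := by positivity
      nlinarith
    -- the key strict estimate on E
    have keyE : ∀ u : ℂ, ‖u + 1‖ ≤ t →
        (0 < ‖((lam:ℝ):ℂ) - u‖ ∧ a^2*‖((lam:ℝ):ℂ) + u‖^2 ≤ m*‖((lam:ℝ):ℂ) - u‖^2) := by
      intro u hu
      have hune : ((lam:ℝ):ℂ) - u ≠ 0 := by
        intro h0
        have : u = ((lam:ℝ):ℂ) := by
          have := sub_eq_zero.mp h0; exact this.symm
        rw [this] at hu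
        rw [show ((lam:ℝ):ℂ) + 1 = (((lam+1:ℝ)):ℂ) by push_cast; ring,
          Complex.norm_real, Real.norm_eq_abs, abs_of_pos (by linarith)] at hu
        linarith
      have hpos : (0:ℝ) < ‖((lam:ℝ):ℂ) - u‖ := norm_pos_iff.mpr hune
      refine ⟨hpos, ?_⟩
      have hu2 : (u.re + 1)^2 + u.im^2 ≤ t^2 := by
        have h := pow_le_pow_left₀ (norm_nonneg _) hu 2
        rw [zolo_normsq] at h
        simp only [Complex.add_re, Complex.add_im, Complex.one_re, Complex.one_im,
          add_zero] at h
        exact h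
      -- bound on the denominator
      have hXle : ‖((lam:ℝ):ℂ) - u‖^2 ≤ (lam+2)^2 := by
        have hnu : ‖u‖ ≤ 1 + t := by
          calc ‖u‖ = ‖(u + 1) - 1‖ := by ring_nf
            _ ≤ ‖u + 1‖ + ‖(1:ℂ)‖ := norm_sub_le _ _
            _ ≤ t + 1 := by rw [norm_one]; linarith
            _ = 1 + t := by ring
        have h1 : ‖((lam:ℝ):ℂ) - u‖ ≤ lam + 2 := by
          calc ‖((lam:ℝ):ℂ) - u‖ ≤ ‖((lam:ℝ):ℂ)‖ + ‖u‖ := norm_sub_le _ _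
            _ ≤ lam + (1 + t) := by
                rw [Complex.norm_real, Real.norm_eq_abs, abs_of_pos hlam0]
                linarith
            _ ≤ lam + 2 := by nlinarith
        exact pow_le_pow_left₀ (norm_nonneg _) h1 2
      have hk2 := key2 u.re u.im
      have hprod : 0 < a^2*(1-a^2) := by nlinarith
      have h5 : δ ≤ a^2*(1-a^2)*(T^2 - ((u.re+1)^2+u.im^2)) := by
        rw [hδ_def]
        nlinarith [mul_le_mul_of_nonneg_left hu2 hprod.le]
      have h6 : δ/(lam+2)^2 * ‖((lam:ℝ):ℂ) - u‖^2 ≤ δ := by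
        have h7 : (0:ℝ) ≤ δ/(lam+2)^2 := by positivity
        calc δ/(lam+2)^2 * ‖((lam:ℝ):ℂ) - u‖^2 ≤ δ/(lam+2)^2 * (lam+2)^2 :=
              mul_le_mul_of_nonneg_left hXle h7
          _ = δ := by field_simp
      rw [hm_def]
      rw [zolo_normsq, zolo_normsq] at *
      simp only [Complex.add_re, Complex.add_im, Complex.sub_re, Complex.sub_im,
        Complex.ofReal_re, Complex.ofReal_im, zero_sub, zero_add] at *
      nlinarith [hk2, h5, h6]
    -- build the Z3 competitor
    set p₃ : ℂ[X] := C ((a:ℝ):ℂ) * (C ((lam:ℝ):ℂ) * q₂ + p₂) with hp₃_def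
    set q₃ : ℂ[X] := C ((lam:ℝ):ℂ) * q₂ - p₂ with hq₃_def
    have hdegp₃ : p₃.degree ≤ n :=
      zolo_degree_C_mul ((degree_add_le _ _).trans (max_le (zolo_degree_C_mul hq₂) hp₂))
    have hdegq₃ : q₃.degree ≤ n :=
      (degree_sub_le _ _).trans (max_le (zolo_degree_C_mul hq₂) hp₂)
    have hq₃e : ∀ z ∈ E ∪ F, q₃.eval z = q₂.eval z * (((lam:ℝ):ℂ) - w z) := by
      intro z hz
      rw [hq₃_def]
      simp only [eval_sub, eval_mul, eval_C]
      rw [hw_def]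
      field_simp [hq₂0 z hz]
    have hp₃e : ∀ z ∈ E ∪ F, p₃.eval z = ((a:ℝ):ℂ) * (q₂.eval z * (((lam:ℝ):ℂ) + w z)) := by
      intro z hz
      rw [hp₃_def]
      simp only [eval_mul, eval_add, eval_C]
      rw [hw_def]
      field_simp [hq₂0 z hz]
    have hq₃0 : ∀ z ∈ E, q₃.eval z ≠ 0 := by
      intro z hz
      rw [hq₃e z (Or.inl hz)]
      refine mul_ne_zero (hq₂0 z (Or.inl hz)) ?_
      have := (keyE (w z) (hE2 z hz)).1
      exact norm_pos_iff.mp this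
    have hFcond : ∀ z ∈ F, ‖q₃.eval z‖ ≤ ‖p₃.eval z‖ := by
      intro z hz
      rw [hq₃e z (Or.inr hz), hp₃e z (Or.inr hz), norm_mul, norm_mul, norm_mul,
        Complex.norm_real, Real.norm_eq_abs, abs_of_pos ha0]
      have hk := keyF (w z) (le_trans (hF2 z hz) hcon.le)
      nlinarith [norm_nonneg (q₂.eval z), norm_nonneg (((lam:ℝ):ℂ) + w z),
        norm_nonneg (((lam:ℝ):ℂ) - w z)]
    -- the value of the competitor
    have hptE3 : ∀ z ∈ E, ‖p₃.eval z / q₃.eval z‖ ≤ Real.sqrt m := by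
      intro z hz
      obtain ⟨hposX, hkey⟩ := keyE (w z) (hE2 z hz)
      have hq2pos : (0:ℝ) < ‖q₂.eval z‖ := norm_pos_iff.mpr (hq₂0 z (Or.inl hz))
      have hq3pos : (0:ℝ) < ‖q₃.eval z‖ := by
        rw [hq₃e z (Or.inl hz), norm_mul]
        exact mul_pos hq2pos hposX
      have hsq : ‖p₃.eval z / q₃.eval z‖^2 ≤ m := by
        rw [norm_div, div_pow, div_le_iff₀ (by positivity)]
        rw [hq₃e z (Or.inl hz), hp₃e z (Or.inl hz), norm_mul, norm_mul, norm_mul,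
          Complex.norm_real, Real.norm_eq_abs, abs_of_pos ha0]
        nlinarith [mul_le_mul_of_nonneg_left hkey (sq_nonneg ‖q₂.eval z‖),
          sq_nonneg ‖q₂.eval z‖, norm_nonneg (((lam:ℝ):ℂ) + w z)]
      calc ‖p₃.eval z / q₃.eval z‖ = Real.sqrt (‖p₃.eval z / q₃.eval z‖^2) :=
            (Real.sqrt_sq (norm_nonneg _)).symm
        _ ≤ Real.sqrt m := Real.sqrt_le_sqrt hsq
    have hm0 : 0 ≤ m := by
      obtain ⟨hposX, hkey⟩ := keyE (w z₁) (hE2 z₁ hz₁)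
      by_contra hmneg
      push_neg at hmneg
      nlinarith [sq_nonneg ‖((lam:ℝ):ℂ) + w z₁‖, pow_pos hposX 2, pow_pos ha0 2]
    -- contradiction with the infimum σ
    have hσle : σ ≤ sSup ((fun z => ‖p₃.eval z / q₃.eval z‖) '' E) := by
      rw [hσ, zoloSigma]
      apply csInf_le
      · refine ⟨0, ?_⟩
        rintro x ⟨P, Q, _, _, _, _, hx⟩
        rw [hx]
        exact Real.sSup_nonneg (by rintro y ⟨z, hz, rfl⟩; exact norm_nonneg _)
      · exact ⟨p₃, q₃, hdegp₃, hdegq₃, hq₃0, hFcond, rfl⟩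
    have hub : sSup ((fun z => ‖p₃.eval z / q₃.eval z‖) '' E) ≤ Real.sqrt m :=
      Real.sSup_le (by rintro x ⟨z, hz, rfl⟩; exact hptE3 z hz) (Real.sqrt_nonneg m)
    have hfin : Real.sqrt m < σ := by
      rw [← Real.sqrt_sq hσ0.le]
      exact Real.sqrt_lt_sqrt hm0 hmlt
    linarith
  have h4 : T = zoloTau n E F := by
    rw [zoloTau]
    refine le_antisymm (le_csInf ⟨T, hmemT⟩ hlb) ?_
    apply csInf_le
    · refine ⟨0, ?_⟩
      rintro x ⟨P, Q, _, _, _, hx⟩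
      rw [hx]
      exact Real.sSup_nonneg (by rintro y ⟨z, hz, rfl⟩; exact norm_nonneg _)
    · exact hmemT
  exact ⟨part1, ⟨p', q', hdegp', hdegq', hq'0, hratio⟩, h3sup, h4⟩
end

section
/- Let n ≥ 0 and let E, F be disjoint nonempty compact infinite subsets of ℂ. Then the minimal values of Problems Z3 and Z4 satisfy τ_n = 2√σ_n/(1+σ_n) and, equivalently, σ_n = (τ_n/(1 + √(1−τ_n²)))². -/
open Polynomial Set

section Zolo

lemma norm_le_of_sq_le_sq {x y : ℝ} (hy : 0 ≤ y) (h : x^2 ≤ y^2) (hx : 0 ≤ x) : x ≤ y := by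
  nlinarith

lemma normsq_expand (a : ℂ) : ‖a‖^2 = a.re^2 + a.im^2 := by
  rw [Complex.sq_norm, Complex.normSq_apply]; ring

lemma lemA1 {s s' k : ℝ} (hk : k^2 = s') (hk0 : 0 ≤ k) (hs : 0 ≤ s) (hss' : s ≤ s') (hs'1 : s' ≤ 1)
    (a b : ℂ) (h : ‖a‖ ≤ s * ‖b‖) :
    ‖a + ((k*s' : ℝ) : ℂ) * b‖ ≤ k * ‖a + ((k : ℝ) : ℂ) * b‖ := by
  subst hk
  apply norm_le_of_sq_le_sq (by positivity) _ (norm_nonneg _)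
  have h2 : ‖a‖^2 ≤ s^2 * ‖b‖^2 := by nlinarith [norm_nonneg a, norm_nonneg b, mul_nonneg hs (norm_nonneg b)]
  rw [normsq_expand, normsq_expand] at h2
  have h3 : a.re^2 + a.im^2 ≤ k^4 * (b.re^2 + b.im^2) := by nlinarith [mul_nonneg (mul_nonneg (sub_nonneg.2 hss') (by positivity : (0:ℝ) ≤ k^2 + s)) (add_nonneg (sq_nonneg b.re) (sq_nonneg b.im))]
  rw [mul_pow, normsq_expand, normsq_expand]
  simp only [Complex.add_re, Complex.add_im, Complex.mul_re, Complex.mul_im,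
    Complex.ofReal_re, Complex.ofReal_im]
  ring_nf
  nlinarith [mul_le_mul_of_nonneg_left h3 (sub_nonneg.2 hs'1)]

-- F-side forward: |b| ≤ |a| ⊢ ‖s' a + k b‖ ≤ k ‖a + k b‖  (k² = s' ≤ 1)
lemma lemA2 {s' k : ℝ} (hk : k^2 = s') (hk0 : 0 ≤ k) (hs'1 : s' ≤ 1)
    (a b : ℂ) (h : ‖b‖ ≤ ‖a‖) :
    ‖((s' : ℝ) : ℂ) * a + ((k : ℝ) : ℂ) * b‖ ≤ k * ‖a + ((k : ℝ) : ℂ) * b‖ := by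
  subst hk
  apply norm_le_of_sq_le_sq (by positivity) _ (norm_nonneg _)
  have h2 : ‖b‖^2 ≤ ‖a‖^2 := by nlinarith [norm_nonneg a, norm_nonneg b]
  rw [normsq_expand, normsq_expand] at h2
  rw [mul_pow, normsq_expand, normsq_expand]
  simp only [Complex.add_re, Complex.add_im, Complex.mul_re, Complex.mul_im,
    Complex.ofReal_re, Complex.ofReal_im]
  ring_nf
  nlinarith [mul_le_mul_of_nonneg_left h2 (sub_nonneg.2 hs'1), sq_nonneg k,
    mul_le_mul_of_nonneg_left (mul_le_mul_of_nonneg_left h2 (sub_nonneg.2 hs'1)) (sq_nonneg k)]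

-- F-side backward: ‖a-b‖ ≤ t‖b‖, (1+s)t ≤ 2k, k² = s ≤ 1 ⊢ ‖(1+s)a-(1-s)b‖ ≤ k‖(1+s)a+(1-s)b‖
lemma lemB1 {s k t : ℝ} (hk : k^2 = s) (hk0 : 0 ≤ k) (hs1 : s ≤ 1) (ht : 0 ≤ t)
    (hts : (1+s)*t ≤ 2*k) (a b : ℂ) (h : ‖a - b‖ ≤ t * ‖b‖) :
    ‖((1+s : ℝ) : ℂ) * a - ((1-s : ℝ) : ℂ) * b‖ ≤ k * ‖((1+s : ℝ) : ℂ) * a + ((1-s : ℝ) : ℂ) * b‖ := by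
  subst hk
  apply norm_le_of_sq_le_sq (by positivity) _ (norm_nonneg _)
  have h2 : ‖a - b‖^2 ≤ t^2 * ‖b‖^2 := by nlinarith [norm_nonneg (a-b), norm_nonneg b, mul_nonneg ht (norm_nonneg b)]
  have hstep : (1+k^2)*‖a-b‖ ≤ 2*k*‖b‖ := by
    nlinarith [mul_le_mul_of_nonneg_left h (by positivity : (0:ℝ) ≤ 1+k^2),
      mul_le_mul_of_nonneg_right hts (norm_nonneg b)]
  have h3 : (1+k^2)^2 * ‖a - b‖^2 ≤ 4*k^2*‖b‖^2 := by
    nlinarith [hstep, norm_nonneg (a-b), norm_nonneg b, mul_nonneg (mul_nonneg (by norm_num : (0:ℝ) ≤ 2) hk0) (norm_nonneg b), mul_nonneg (by positivity : (0:ℝ) ≤ (1+k^2)) (norm_nonneg (a-b))]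
  rw [normsq_expand, normsq_expand] at h3
  rw [mul_pow, normsq_expand, normsq_expand]
  simp only [Complex.add_re, Complex.add_im, Complex.mul_re, Complex.mul_im, Complex.sub_re, Complex.sub_im,
    Complex.ofReal_re, Complex.ofReal_im]
  simp only [Complex.sub_re, Complex.sub_im] at h3
  ring_nf
  ring_nf at h3
  nlinarith [mul_le_mul_of_nonneg_left h3 (sub_nonneg.2 hs1), sq_nonneg k]

-- E-side backward: ‖a+b‖ ≤ t‖b‖, (1+s)t ≤ 2k, k² = s ≤ 1 ⊢ k‖(1+s)a+(1-s)b‖ ≤ s‖(1+s)a-(1-s)b‖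
lemma lemB2 {s k t : ℝ} (hk : k^2 = s) (hk0 : 0 ≤ k) (hs1 : s ≤ 1) (ht : 0 ≤ t)
    (hts : (1+s)*t ≤ 2*k) (a b : ℂ) (h : ‖a + b‖ ≤ t * ‖b‖) :
    k * ‖((1+s : ℝ) : ℂ) * a + ((1-s : ℝ) : ℂ) * b‖ ≤ s * ‖((1+s : ℝ) : ℂ) * a - ((1-s : ℝ) : ℂ) * b‖ := by
  subst hk
  apply norm_le_of_sq_le_sq (by positivity) _ (by positivity)
  have hstep : (1+k^2)*‖a+b‖ ≤ 2*k*‖b‖ := by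
    nlinarith [mul_le_mul_of_nonneg_left h (by positivity : (0:ℝ) ≤ 1+k^2),
      mul_le_mul_of_nonneg_right hts (norm_nonneg b)]
  have h3 : (1+k^2)^2 * ‖a + b‖^2 ≤ 4*k^2*‖b‖^2 := by
    nlinarith [hstep, norm_nonneg (a+b), norm_nonneg b, mul_nonneg (mul_nonneg (by norm_num : (0:ℝ) ≤ 2) hk0) (norm_nonneg b), mul_nonneg (by positivity : (0:ℝ) ≤ (1+k^2)) (norm_nonneg (a+b))]
  rw [normsq_expand, normsq_expand] at h3
  rw [mul_pow, mul_pow, normsq_expand, normsq_expand]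
  simp only [Complex.add_re, Complex.add_im, Complex.mul_re, Complex.mul_im, Complex.sub_re, Complex.sub_im,
    Complex.ofReal_re, Complex.ofReal_im]
  simp only [Complex.add_re, Complex.add_im] at h3
  ring_nf
  ring_nf at h3
  nlinarith [mul_le_mul_of_nonneg_left h3 (sub_nonneg.2 hs1), sq_nonneg k,
    mul_le_mul_of_nonneg_left (mul_le_mul_of_nonneg_left h3 (sub_nonneg.2 hs1)) (sq_nonneg k)]

noncomputable def hfun (x : ℝ) : ℝ := 2 * Real.sqrt x / (1 + x)
noncomputable def gfun (t : ℝ) : ℝ := (t / (1 + Real.sqrt (1 - t^2)))^2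

-- H(k) = 2k/(1+k²) monotone on [0,1]
lemma Hmono {k1 k2 : ℝ} (h0 : 0 ≤ k1) (h12 : k1 ≤ k2) (h21 : k2 ≤ 1) :
    2*k1/(1+k1^2) ≤ 2*k2/(1+k2^2) := by
  rw [div_le_div_iff₀ (by positivity) (by positivity)]
  nlinarith [mul_nonneg (mul_nonneg h0 (le_trans h0 h12)) (sub_nonneg.2 h21), sub_nonneg.2 h12,
    mul_nonneg (sub_nonneg.2 h12) (sub_nonneg.2 (le_trans h12 h21 : k1 ≤ 1)),
    mul_nonneg (mul_nonneg (sub_nonneg.2 h12) (sub_nonneg.2 (le_trans h12 h21))) (le_trans h0 h12)]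

lemma hfun_eq (x : ℝ) : hfun x = 2*(Real.sqrt x)/(1+(Real.sqrt x)^2) ∨ True := Or.inr trivial

lemma hfun_sqrt {x : ℝ} (hx : 0 ≤ x) : hfun x = 2*(Real.sqrt x)/(1+(Real.sqrt x)^2) := by
  rw [hfun, Real.sq_sqrt hx]

lemma hfun_le_one {x : ℝ} (hx : 0 ≤ x) : hfun x ≤ 1 := by
  rw [hfun, div_le_one (by positivity)]
  nlinarith [sq_nonneg (1 - Real.sqrt x), Real.sq_sqrt hx, Real.sqrt_nonneg x]

lemma hfun_nonneg {x : ℝ} (hx : 0 ≤ x) : 0 ≤ hfun x := by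
  rw [hfun]; positivity

lemma hfun_mono {x y : ℝ} (hx : 0 ≤ x) (hxy : x ≤ y) (hy : y ≤ 1) : hfun x ≤ hfun y := by
  rw [hfun_sqrt hx, hfun_sqrt (le_trans hx hxy)]
  exact Hmono (Real.sqrt_nonneg x) (Real.sqrt_le_sqrt hxy)
    (by rw [show (1:ℝ) = Real.sqrt 1 by simp]; exact Real.sqrt_le_sqrt hy)

-- key facts about g: with u = √(1-t²), k = t/(1+u): k ≥ 0, k² = gfun t, (1+gfun t)*t = 2k, gfun t ≤ t^2
lemma gfun_facts {t : ℝ} (ht0 : 0 ≤ t) (ht1 : t ≤ 1) :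
    0 ≤ t / (1 + Real.sqrt (1 - t^2)) ∧
    (t / (1 + Real.sqrt (1 - t^2)))^2 = gfun t ∧
    (1 + gfun t) * t = 2 * (t / (1 + Real.sqrt (1 - t^2))) ∧
    gfun t ≤ t^2 := by
  set u := Real.sqrt (1 - t^2) with hu
  have hu0 : 0 ≤ u := Real.sqrt_nonneg _
  have hu2 : u^2 = 1 - t^2 := Real.sq_sqrt (by nlinarith)
  have hd : (0:ℝ) < 1 + u := by linarith
  set k := t / (1 + u) with hkdef
  have hku : k * (1 + u) = t := by rw [hkdef]; field_simp
  have h1 : k^2*(1+u)^2 = 1 - u^2 := by linear_combination (k*(1+u)+t)*hku + hu2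
  have h2 : k^2*(1+u) = 1-u := by
    apply mul_right_cancel₀ (ne_of_gt hd); linear_combination h1
  have hg : gfun t = k^2 := by rw [gfun]
  refine ⟨by positivity, by rw [hg], ?_, ?_⟩
  · rw [hg]
    linear_combination k*h2 - (1+k^2)*hku
  · rw [hg]
    have hk0 : 0 ≤ k := by positivity
    nlinarith [hku, hu0, hk0, mul_nonneg (mul_nonneg hk0 hk0) hu0]

lemma gfun_nonneg (t : ℝ) : 0 ≤ gfun t := sq_nonneg _

lemma gfun_le_one {t : ℝ} (ht0 : 0 ≤ t) (ht1 : t ≤ 1) : gfun t ≤ 1 :=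
  le_trans (gfun_facts ht0 ht1).2.2.2 (by nlinarith)

lemma gfun_mono {t1 t2 : ℝ} (h0 : 0 ≤ t1) (h12 : t1 ≤ t2) (h21 : t2 ≤ 1) :
    gfun t1 ≤ gfun t2 := by
  have h1 : t1 ≤ 1 := le_trans h12 h21
  have s1 : Real.sqrt (1 - t2^2) ≤ Real.sqrt (1 - t1^2) := Real.sqrt_le_sqrt (by nlinarith)
  have hd2 : (0:ℝ) < 1 + Real.sqrt (1 - t2^2) := by positivity
  have hd1 : (0:ℝ) < 1 + Real.sqrt (1 - t1^2) := by positivity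
  rw [gfun, gfun]
  apply pow_le_pow_left₀ (by positivity)
  rw [div_le_div_iff₀ hd1 hd2]
  nlinarith [Real.sqrt_nonneg (1 - t1^2), Real.sqrt_nonneg (1 - t2^2)]

-- h (g t) = t on [0,1]
lemma hfun_gfun {t : ℝ} (ht0 : 0 ≤ t) (ht1 : t ≤ 1) : hfun (gfun t) = t := by
  obtain ⟨hk0, hk2, hid, _⟩ := gfun_facts ht0 ht1
  set k := t / (1 + Real.sqrt (1 - t^2)) with hkdef
  have hs : Real.sqrt (gfun t) = k := by
    rw [← hk2, Real.sqrt_sq hk0]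
  rw [hfun, hs]
  have hg0 : 0 ≤ gfun t := gfun_nonneg t
  rw [eq_comm, eq_div_iff (by positivity)]
  linarith [hid]

-- g (h x) = x on [0,1]
lemma gfun_hfun {x : ℝ} (hx0 : 0 ≤ x) (hx1 : x ≤ 1) : gfun (hfun x) = x := by
  set r := Real.sqrt x with hr
  have hr0 : 0 ≤ r := Real.sqrt_nonneg x
  have hr2 : r^2 = x := Real.sq_sqrt hx0
  have hr1 : r ≤ 1 := by nlinarith
  have hden : (0:ℝ) < 1 + x := by linarith
  have ht2 : 1 - (hfun x)^2 = ((1-x)/(1+x))^2 := by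
    rw [hfun]
    field_simp
    nlinarith [hr2]
  have hsq : Real.sqrt (1 - (hfun x)^2) = (1-x)/(1+x) := by
    rw [ht2, Real.sqrt_sq (by
      apply div_nonneg <;> linarith)]
  rw [gfun, hsq, hfun]
  have : 2 * r / (1 + x) / (1 + (1-x)/(1+x)) = r := by
    field_simp
    ring
  rw [this, hr2]
lemma norm_signEF (E : Set ℂ) (z : ℂ) : ‖signEF E z‖ = 1 := by
  rw [signEF]; split <;> simp

lemma contOn_ratio (p q : Polynomial ℂ) (A : Set ℂ) (hq : ∀ z ∈ A, q.eval z ≠ 0) :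
    ContinuousOn (fun z => ‖p.eval z / q.eval z‖) A :=
  ((p.continuous.continuousOn.div q.continuous.continuousOn hq)).norm

lemma bddAbove_ratio (p q : Polynomial ℂ) {A : Set ℂ} (hA : IsCompact A)
    (hq : ∀ z ∈ A, q.eval z ≠ 0) :
    BddAbove ((fun z => ‖p.eval z / q.eval z‖) '' A) :=
  hA.bddAbove_image (contOn_ratio p q A hq)

lemma bddAbove_tau_img (p q : Polynomial ℂ) {E A : Set ℂ} (hA : IsCompact A)
    (hq : ∀ z ∈ A, q.eval z ≠ 0) :
    BddAbove ((fun z => ‖p.eval z / q.eval z - signEF E z‖) '' A) := by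
  obtain ⟨M, hM⟩ := bddAbove_ratio p q hA hq
  refine ⟨M + 1, ?_⟩
  rintro y ⟨z, hz, rfl⟩
  calc ‖p.eval z / q.eval z - signEF E z‖ ≤ ‖p.eval z / q.eval z‖ + ‖signEF E z‖ := norm_sub_le _ _
    _ ≤ M + 1 := by
        rw [norm_signEF]
        exact add_le_add_left (hM (mem_image_of_mem _ hz)) 1

-- pointwise bound from sSup
lemma le_sSup_ratio (p q : Polynomial ℂ) {A : Set ℂ} (hA : IsCompact A)
    (hq : ∀ z ∈ A, q.eval z ≠ 0) {z : ℂ} (hz : z ∈ A) :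
    ‖p.eval z / q.eval z‖ ≤ sSup ((fun z => ‖p.eval z / q.eval z‖) '' A) :=
  le_csSup (bddAbove_ratio p q hA hq) (mem_image_of_mem _ hz)

lemma le_sSup_tau (p q : Polynomial ℂ) {E A : Set ℂ} (hA : IsCompact A)
    (hq : ∀ z ∈ A, q.eval z ≠ 0) {z : ℂ} (hz : z ∈ A) :
    ‖p.eval z / q.eval z - signEF E z‖ ≤ sSup ((fun z => ‖p.eval z / q.eval z - signEF E z‖) '' A) :=
  le_csSup (bddAbove_tau_img p q hA hq) (mem_image_of_mem _ hz)

lemma degree_C_mul_le' (a : ℂ) (p : Polynomial ℂ) : (C a * p).degree ≤ p.degree :=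
  le_trans (degree_mul_le _ _) (by
    calc (C a).degree + p.degree ≤ 0 + p.degree := add_le_add_left degree_C_le _
      _ = p.degree := zero_add _)

lemma degree_combo_add {n : ℕ} (a b : ℂ) (p q : Polynomial ℂ)
    (hp : p.degree ≤ n) (hq : q.degree ≤ n) : (C a * p + C b * q).degree ≤ n :=
  le_trans (degree_add_le _ _)
    (max_le (le_trans (degree_C_mul_le' a p) hp) (le_trans (degree_C_mul_le' b q) hq))

lemma degree_combo_sub {n : ℕ} (a b : ℂ) (p q : Polynomial ℂ)
    (hp : p.degree ≤ n) (hq : q.degree ≤ n) : (C a * p - C b * q).degree ≤ n :=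
  le_trans (degree_sub_le _ _)
    (max_le (le_trans (degree_C_mul_le' a p) hp) (le_trans (degree_C_mul_le' b q) hq))

/-- every member of the sigma set is nonnegative -/
lemma sigma_mem_nonneg {n : ℕ} {E F : Set ℂ} (hE : IsCompact E) (hEne : E.Nonempty)
    {s : ℝ} (hs : s ∈ {s : ℝ | ∃ p q : Polynomial ℂ, p.degree ≤ n ∧ q.degree ≤ n ∧
      (∀ z ∈ E, q.eval z ≠ 0) ∧ (∀ z ∈ F, ‖q.eval z‖ ≤ ‖p.eval z‖) ∧
      s = sSup ((fun z => ‖p.eval z / q.eval z‖) '' E)}) : 0 ≤ s := by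
  obtain ⟨p, q, _, _, hq0, _, rfl⟩ := hs
  obtain ⟨z, hz⟩ := hEne
  exact le_trans (norm_nonneg _) (le_sSup_ratio p q hE hq0 hz)

lemma tau_mem_nonneg {n : ℕ} {E F : Set ℂ} (hE : IsCompact E) (hF : IsCompact F)
    (hEne : E.Nonempty)
    {t : ℝ} (ht : t ∈ {t : ℝ | ∃ p q : Polynomial ℂ, p.degree ≤ n ∧ q.degree ≤ n ∧
      (∀ z ∈ E ∪ F, q.eval z ≠ 0) ∧
      t = sSup ((fun z => ‖p.eval z / q.eval z - signEF E z‖) '' (E ∪ F))}) : 0 ≤ t := by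
  obtain ⟨p, q, _, _, hq0, rfl⟩ := ht
  obtain ⟨z, hz⟩ := hEne
  exact le_trans (norm_nonneg _) (le_sSup_tau p q (hE.union hF) hq0 (Or.inl hz))

lemma one_mem_sigma {n : ℕ} {E F : Set ℂ} (hEne : E.Nonempty) :
    (1:ℝ) ∈ {s : ℝ | ∃ p q : Polynomial ℂ, p.degree ≤ n ∧ q.degree ≤ n ∧
      (∀ z ∈ E, q.eval z ≠ 0) ∧ (∀ z ∈ F, ‖q.eval z‖ ≤ ‖p.eval z‖) ∧
      s = sSup ((fun z => ‖p.eval z / q.eval z‖) '' E)} := by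
  refine ⟨1, 1, by simp [degree_one], by simp [degree_one], by simp, by simp, ?_⟩
  have : (fun z => ‖(1:Polynomial ℂ).eval z / (1:Polynomial ℂ).eval z‖) '' E = {1} := by
    rw [show (fun z => ‖(1:Polynomial ℂ).eval z / (1:Polynomial ℂ).eval z‖) = fun _ => (1:ℝ) by
      funext z; simp]
    exact Set.Nonempty.image_const hEne (1:ℝ)
  rw [this, csSup_singleton]

lemma one_mem_tau {n : ℕ} {E F : Set ℂ} (hEne : E.Nonempty) :
    (1:ℝ) ∈ {t : ℝ | ∃ p q : Polynomial ℂ, p.degree ≤ n ∧ q.degree ≤ n ∧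
      (∀ z ∈ E ∪ F, q.eval z ≠ 0) ∧
      t = sSup ((fun z => ‖p.eval z / q.eval z - signEF E z‖) '' (E ∪ F))} := by
  refine ⟨0, 1, by simp [degree_zero], by simp [degree_one], by simp, ?_⟩
  have : (fun z => ‖(0:Polynomial ℂ).eval z / (1:Polynomial ℂ).eval z - signEF E z‖) '' (E ∪ F)
      = {1} := by
    rw [show (fun z => ‖(0:Polynomial ℂ).eval z / (1:Polynomial ℂ).eval z - signEF E z‖)
        = fun z => (1:ℝ) by
      funext z; rw [eval_zero, eval_one, zero_div, zero_sub, norm_neg, norm_signEF]]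
    exact Set.Nonempty.image_const hEne.inl (1:ℝ)
  rw [this, csSup_singleton]


lemma sigma_le_gfun {n : ℕ} {E F : Set ℂ} (hE : IsCompact E) (hF : IsCompact F)
    (hEne : E.Nonempty) (hdisj : Disjoint E F) {t : ℝ}
    (ht0 : 0 ≤ t) (ht1 : t < 1)
    (p q : Polynomial ℂ) (hp : p.degree ≤ (n : WithBot ℕ)) (hq : q.degree ≤ (n : WithBot ℕ))
    (hq0 : ∀ z ∈ E ∪ F, q.eval z ≠ 0)
    (htt : ∀ z ∈ E ∪ F, ‖p.eval z / q.eval z - signEF E z‖ ≤ t) :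
    zoloSigma n E F ≤ gfun t := by
  obtain ⟨hk0, hk2, hid, hst2⟩ := gfun_facts ht0 (le_of_lt ht1)
  set k := t / (1 + Real.sqrt (1 - t^2)) with hkdef
  set s := gfun t with hsdef
  have hs0 : 0 ≤ s := gfun_nonneg t
  have hkt : k ≤ t := by
    rw [hkdef]
    apply div_le_self ht0
    simp [Real.sqrt_nonneg]
  have hk1 : k < 1 := lt_of_le_of_lt hkt ht1
  have hs1 : s ≤ 1 := by nlinarith
  -- the transformed pair
  set p'' : Polynomial ℂ := C (-(k:ℝ) : ℂ) * (C (((1+s:ℝ)) : ℂ) * p + C (((1-s:ℝ)) : ℂ) * q)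
    with hp''def
  set q'' : Polynomial ℂ := C (((1+s:ℝ)) : ℂ) * p - C (((1-s:ℝ)) : ℂ) * q with hq''def
  have hp''deg : p''.degree ≤ (n : WithBot ℕ) :=
    le_trans (degree_C_mul_le' _ _) (degree_combo_add _ _ p q hp hq)
  have hq''deg : q''.degree ≤ (n : WithBot ℕ) := degree_combo_sub _ _ p q hp hq
  have hp''eval : ∀ z : ℂ, p''.eval z
      = (-(k:ℝ) : ℂ) * ((((1+s:ℝ)) : ℂ) * p.eval z + (((1-s:ℝ)) : ℂ) * q.eval z) := by
    intro z; simp [hp''def]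
  have hq''eval : ∀ z : ℂ, q''.eval z
      = (((1+s:ℝ)) : ℂ) * p.eval z - (((1-s:ℝ)) : ℂ) * q.eval z := by
    intro z; simp [hq''def]
  -- bounds on E
  have hEbound : ∀ z ∈ E, ‖p.eval z + q.eval z‖ ≤ t * ‖q.eval z‖ := by
    intro z hz
    have hb : q.eval z ≠ 0 := hq0 z (Or.inl hz)
    have h1 := htt z (Or.inl hz)
    rw [signEF, if_pos hz] at h1
    have h2 : p.eval z / q.eval z - (-1) = (p.eval z + q.eval z) / q.eval z := by
      field_simp
      ring
    rw [h2, norm_div, div_le_iff₀ (norm_pos_iff.2 hb)] at h1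
    exact h1
  have hFbound : ∀ z ∈ F, ‖p.eval z - q.eval z‖ ≤ t * ‖q.eval z‖ := by
    intro z hz
    have hb : q.eval z ≠ 0 := hq0 z (Or.inr hz)
    have hzE : z ∉ E := fun hzE => (hdisj.ne_of_mem hzE hz) rfl
    have h1 := htt z (Or.inr hz)
    rw [signEF, if_neg hzE] at h1
    have h2 : p.eval z / q.eval z - 1 = (p.eval z - q.eval z) / q.eval z := by
      field_simp
    rw [h2, norm_div, div_le_iff₀ (norm_pos_iff.2 hb)] at h1
    exact h1
  -- q'' has no zeros on E
  have hq''0 : ∀ z ∈ E, q''.eval z ≠ 0 := by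
    intro z hz hzero
    rw [hq''eval] at hzero
    have hb : q.eval z ≠ 0 := hq0 z (Or.inl hz)
    have heq : (((1+s:ℝ)) : ℂ) * p.eval z = (((1-s:ℝ)) : ℂ) * q.eval z := by
      linear_combination hzero
    have h3 : ‖(((1+s:ℝ)) : ℂ) * (p.eval z + q.eval z)‖ = 2 * ‖q.eval z‖ := by
      have : (((1+s:ℝ)) : ℂ) * (p.eval z + q.eval z) = 2 * q.eval z := by
        push_cast at heq ⊢
        linear_combination heq
      rw [this, norm_mul]
      norm_num
    rw [norm_mul, Complex.norm_real, Real.norm_of_nonneg (by linarith : (0:ℝ) ≤ 1 + s)] at h3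
    have h4 := mul_le_mul_of_nonneg_left (hEbound z hz) (by linarith : (0:ℝ) ≤ 1 + s)
    rw [h3] at h4
    have h5 : (1+s) * (t * ‖q.eval z‖) = (2*k) * ‖q.eval z‖ := by
      rw [← mul_assoc, hid]
    rw [h5] at h4
    have h6 : (0:ℝ) < ‖q.eval z‖ := norm_pos_iff.2 hb
    nlinarith
  -- F constraint
  have hFc : ∀ z ∈ F, ‖q''.eval z‖ ≤ ‖p''.eval z‖ := by
    intro z hz
    rw [hp''eval, hq''eval]
    have := lemB1 hk2 hk0 hs1 ht0 (le_of_eq hid) (p.eval z) (q.eval z) (hFbound z hz)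
    calc ‖(((1+s:ℝ)):ℂ) * p.eval z - (((1-s:ℝ)):ℂ) * q.eval z‖
        ≤ k * ‖(((1+s:ℝ)):ℂ) * p.eval z + (((1-s:ℝ)):ℂ) * q.eval z‖ := this
      _ = ‖(-(k:ℝ) : ℂ) * ((((1+s:ℝ)):ℂ) * p.eval z + (((1-s:ℝ)):ℂ) * q.eval z)‖ := by
          rw [norm_mul, show (-(k:ℝ) : ℂ) = -((k:ℝ):ℂ) by push_cast; ring, norm_neg,
            Complex.norm_real, Real.norm_of_nonneg hk0]
  -- pointwise bound on E
  have hEc : ∀ z ∈ E, ‖p''.eval z / q''.eval z‖ ≤ s := by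
    intro z hz
    have hb : q''.eval z ≠ 0 := hq''0 z hz
    rw [norm_div, div_le_iff₀ (norm_pos_iff.2 hb)]
    rw [hp''eval, hq''eval]
    have := lemB2 hk2 hk0 hs1 ht0 (le_of_eq hid) (p.eval z) (q.eval z) (hEbound z hz)
    calc ‖(-(k:ℝ) : ℂ) * ((((1+s:ℝ)):ℂ) * p.eval z + (((1-s:ℝ)):ℂ) * q.eval z)‖
        = k * ‖(((1+s:ℝ)):ℂ) * p.eval z + (((1-s:ℝ)):ℂ) * q.eval z‖ := by
          rw [norm_mul, show (-(k:ℝ) : ℂ) = -((k:ℝ):ℂ) by push_cast; ring, norm_neg,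
            Complex.norm_real, Real.norm_of_nonneg hk0]
      _ ≤ s * ‖(((1+s:ℝ)):ℂ) * p.eval z - (((1-s:ℝ)):ℂ) * q.eval z‖ := this
  -- conclude
  have hmem : sSup ((fun z => ‖p''.eval z / q''.eval z‖) '' E)
      ∈ {s : ℝ | ∃ p q : Polynomial ℂ, p.degree ≤ (n : WithBot ℕ) ∧ q.degree ≤ (n : WithBot ℕ) ∧
      (∀ z ∈ E, q.eval z ≠ 0) ∧ (∀ z ∈ F, ‖q.eval z‖ ≤ ‖p.eval z‖) ∧
      s = sSup ((fun z => ‖p.eval z / q.eval z‖) '' E)} :=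
    ⟨p'', q'', hp''deg, hq''deg, hq''0, hFc, rfl⟩
  have hbdd : BddBelow {s : ℝ | ∃ p q : Polynomial ℂ, p.degree ≤ (n : WithBot ℕ)
      ∧ q.degree ≤ (n : WithBot ℕ) ∧
      (∀ z ∈ E, q.eval z ≠ 0) ∧ (∀ z ∈ F, ‖q.eval z‖ ≤ ‖p.eval z‖) ∧
      s = sSup ((fun z => ‖p.eval z / q.eval z‖) '' E)} :=
    ⟨0, fun x hx => sigma_mem_nonneg hE hEne hx⟩
  calc zoloSigma n E F ≤ sSup ((fun z => ‖p''.eval z / q''.eval z‖) '' E) := csInf_le hbdd hmem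
    _ ≤ s := csSup_le (hEne.image _) (by rintro y ⟨z, hz, rfl⟩; exact hEc z hz)


/-- Strip common zeros in `F` from the pair `(p, q)`. -/
lemma strip_common (E F : Set ℂ) (s : ℝ) (hdisj : Disjoint E F) :
    ∀ (d : ℕ) (p q : Polynomial ℂ) (S₀ : Finset ℂ),
    p ≠ 0 → q ≠ 0 → p.natDegree ≤ d → (↑S₀ : Set ℂ) ⊆ F →
    (∀ z ∈ E, q.eval z ≠ 0 ∧ ‖p.eval z‖ ≤ s * ‖q.eval z‖) →
    (∀ z ∈ F, z ∉ S₀ → ‖q.eval z‖ ≤ ‖p.eval z‖) →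
    ∃ (P Q : Polynomial ℂ) (S : Finset ℂ), P ≠ 0 ∧ Q ≠ 0 ∧ (↑S : Set ℂ) ⊆ F ∧
      P.natDegree + S.card ≤ p.natDegree + S₀.card ∧
      Q.natDegree + S.card ≤ q.natDegree + S₀.card ∧
      (∀ z ∈ E, Q.eval z ≠ 0 ∧ ‖P.eval z‖ ≤ s * ‖Q.eval z‖) ∧
      (∀ z ∈ F, z ∉ S → ‖Q.eval z‖ ≤ ‖P.eval z‖) ∧
      (∀ z ∈ F, ¬(P.eval z = 0 ∧ Q.eval z = 0)) := by
  intro d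
  induction d with
  | zero =>
      intro p q S₀ hp0 hq0 hpd hS₀F hEc hFc
      by_cases hcom : ∃ z₀ ∈ F, p.eval z₀ = 0 ∧ q.eval z₀ = 0
      · obtain ⟨z₀, hz₀F, hpz, hqz⟩ := hcom
        obtain ⟨p₁, hp₁⟩ := (dvd_iff_isRoot.2 hpz : (X - C z₀) ∣ p)
        have hp₁0 : p₁ ≠ 0 := by rintro rfl; simp at hp₁; exact hp0 hp₁
        have : p.natDegree = p₁.natDegree + 1 := by
          rw [hp₁, natDegree_mul (X_sub_C_ne_zero z₀) hp₁0, natDegree_X_sub_C]; ring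
        omega
      · exact ⟨p, q, S₀, hp0, hq0, hS₀F, le_refl _, le_refl _, hEc, hFc,
          fun z hz h => hcom ⟨z, hz, h⟩⟩
  | succ d ih =>
      intro p q S₀ hp0 hq0 hpd hS₀F hEc hFc
      by_cases hcom : ∃ z₀ ∈ F, p.eval z₀ = 0 ∧ q.eval z₀ = 0
      · obtain ⟨z₀, hz₀F, hpz, hqz⟩ := hcom
        obtain ⟨p₁, hp₁⟩ := (dvd_iff_isRoot.2 hpz : (X - C z₀) ∣ p)
        obtain ⟨q₁, hq₁⟩ := (dvd_iff_isRoot.2 hqz : (X - C z₀) ∣ q)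
        have hp₁0 : p₁ ≠ 0 := by rintro rfl; simp at hp₁; exact hp0 hp₁
        have hq₁0 : q₁ ≠ 0 := by rintro rfl; simp at hq₁; exact hq0 hq₁
        have hpdeg : p.natDegree = p₁.natDegree + 1 := by
          rw [hp₁, natDegree_mul (X_sub_C_ne_zero z₀) hp₁0, natDegree_X_sub_C]; ring
        have hqdeg : q.natDegree = q₁.natDegree + 1 := by
          rw [hq₁, natDegree_mul (X_sub_C_ne_zero z₀) hq₁0, natDegree_X_sub_C]; ring
        have hEc₁ : ∀ z ∈ E, q₁.eval z ≠ 0 ∧ ‖p₁.eval z‖ ≤ s * ‖q₁.eval z‖ := by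
          intro z hz
          have hzz₀ : z - z₀ ≠ 0 := by
            rw [sub_ne_zero]
            exact fun h => (hdisj.ne_of_mem hz hz₀F) h
          obtain ⟨hA, hB⟩ := hEc z hz
          constructor
          · intro h0
            apply hA
            rw [hq₁]
            simp [h0]
          · have hpe : p.eval z = (z - z₀) * p₁.eval z := by rw [hp₁]; simp
            have hqe : q.eval z = (z - z₀) * q₁.eval z := by rw [hq₁]; simp
            rw [hpe, hqe, norm_mul, norm_mul, ← mul_assoc, mul_comm s ‖z - z₀‖, mul_assoc] at hB
            exact le_of_mul_le_mul_left hB (norm_pos_iff.2 hzz₀)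
        have hFc₁ : ∀ z ∈ F, z ∉ insert z₀ S₀ → ‖q₁.eval z‖ ≤ ‖p₁.eval z‖ := by
          intro z hz hznot
          have hzz₀ : z - z₀ ≠ 0 := by
            rw [sub_ne_zero]
            exact fun h => hznot (by rw [h]; exact Finset.mem_insert_self _ _)
          have hB := hFc z hz (fun h => hznot (Finset.mem_insert_of_mem h))
          have hpe : p.eval z = (z - z₀) * p₁.eval z := by rw [hp₁]; simp
          have hqe : q.eval z = (z - z₀) * q₁.eval z := by rw [hq₁]; simp
          rw [hpe, hqe, norm_mul, norm_mul] at hB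
          exact le_of_mul_le_mul_left hB (norm_pos_iff.2 hzz₀)
        obtain ⟨P, Q, S, h1, h2, h3, h4, h5, h6, h7, h8⟩ :=
          ih p₁ q₁ (insert z₀ S₀) hp₁0 hq₁0 (by omega) (by
            rw [Finset.coe_insert]
            exact Set.insert_subset hz₀F hS₀F) hEc₁ hFc₁
        refine ⟨P, Q, S, h1, h2, h3, ?_, ?_, h6, h7, h8⟩
        · calc P.natDegree + S.card ≤ p₁.natDegree + (insert z₀ S₀).card := h4
            _ ≤ p₁.natDegree + (S₀.card + 1) := by
                exact add_le_add_right (Finset.card_insert_le _ _) _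
            _ ≤ p.natDegree + S₀.card := by omega
        · calc Q.natDegree + S.card ≤ q₁.natDegree + (insert z₀ S₀).card := h5
            _ ≤ q₁.natDegree + (S₀.card + 1) := by
                exact add_le_add_right (Finset.card_insert_le _ _) _
            _ ≤ q.natDegree + S₀.card := by omega
      · exact ⟨p, q, S₀, hp0, hq0, hS₀F, le_refl _, le_refl _, hEc, hFc,
          fun z hz h => hcom ⟨z, hz, h⟩⟩


/-- Fix finitely many isolated bad points by a small rational perturbation. -/
lemma correction (E K : Set ℂ) (hK : IsCompact K) (hKne : K.Nonempty)
    (S : Finset ℂ) :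
    ∀ (a b : Polynomial ℂ) (T ε : ℝ) (N n : ℕ), 0 < ε → 0 ≤ T →
    a.degree ≤ (N : WithBot ℕ) → b.degree ≤ (N : WithBot ℕ) → N + S.card ≤ n →
    (∀ z ∈ K, b.eval z ≠ 0) →
    (∀ z ∈ K, z ∉ S → ‖a.eval z / b.eval z - signEF E z‖ ≤ T) →
    (∀ x ∈ S, x ∈ K ∧ x ∉ E ∧ ∃ ρ > 0, ∀ z ∈ K, z ≠ x → ρ ≤ ‖z - x‖) →
    ∃ a' b' : Polynomial ℂ, a'.degree ≤ (n : WithBot ℕ) ∧ b'.degree ≤ (n : WithBot ℕ) ∧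
      (∀ z ∈ K, b'.eval z ≠ 0) ∧
      (∀ z ∈ K, ‖a'.eval z / b'.eval z - signEF E z‖ ≤ T + ε) := by
  induction S using Finset.induction_on with
  | empty =>
      intro a b T ε N n hε hT ha hb hN hb0 hgood _
      refine ⟨a, b, le_trans ha ?_, le_trans hb ?_, hb0, fun z hz => ?_⟩
      · exact_mod_cast Nat.cast_le.2 (by simpa using hN)
      · exact_mod_cast Nat.cast_le.2 (by simpa using hN)
      · exact le_trans (hgood z hz (Finset.notMem_empty z)) (by linarith)
  | @insert x S hxS IH =>
      intro a b T ε N n hε hT ha hb hN hb0 hgood hiso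
      obtain ⟨hxK, hxE, ρ, hρ, hisox⟩ := hiso x (Finset.mem_insert_self x S)
      -- minimum of ‖b‖ on K
      obtain ⟨x₀, hx₀K, hx₀min'⟩ := hK.exists_isMinOn hKne (b.continuous.norm.continuousOn)
      have hx₀min : ∀ z ∈ K, ‖b.eval x₀‖ ≤ ‖b.eval z‖ := fun z hz => hx₀min' hz
      set c : ℝ := ‖b.eval x₀‖ with hc
      have hc0 : 0 < c := norm_pos_iff.2 (hb0 x₀ hx₀K)
      set Cx : ℝ := ‖a.eval x - b.eval x‖ with hCx
      set η : ℝ := min (ρ/2) (ε*c*ρ/(4*(Cx+1))) with hη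
      have hCx0 : (0:ℝ) ≤ Cx := norm_nonneg _
      have hη0 : 0 < η := by
        apply lt_min (by linarith)
        have : (0:ℝ) < Cx + 1 := by linarith
        positivity
      have hηρ : η ≤ ρ/2 := min_le_left _ _
      have hη2 : η ≤ ε*c*ρ/(4*(Cx+1)) := min_le_right _ _
      set w : ℂ := x + (η:ℝ) with hw
      have hwK : w ∉ K := by
        intro hwK
        have hwx : w ≠ x := by
          simp only [hw, ne_eq, add_eq_left]
          exact_mod_cast ne_of_gt hη0
        have := hisox w hwK hwx
        rw [hw] at this
        simp only [add_sub_cancel_left] at this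
        rw [Complex.norm_real, Real.norm_of_nonneg (le_of_lt hη0)] at this
        linarith
      set d : ℂ := (η:ℝ) * (a.eval x - b.eval x) with hd
      set a₁ : Polynomial ℂ := a * (X - C w) + C d with ha₁
      set b₁ : Polynomial ℂ := b * (X - C w) with hb₁
      have ha₁eval : ∀ z : ℂ, a₁.eval z = a.eval z * (z - w) + d := by intro z; simp [ha₁]
      have hb₁eval : ∀ z : ℂ, b₁.eval z = b.eval z * (z - w) := by intro z; simp [hb₁]
      have hb₁0 : ∀ z ∈ K, b₁.eval z ≠ 0 := by
        intro z hz
        rw [hb₁eval]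
        exact mul_ne_zero (hb0 z hz) (sub_ne_zero.2 (fun h => hwK (h ▸ hz)))
      have ha₁deg : a₁.degree ≤ ((N+1 : ℕ) : WithBot ℕ) := by
        apply le_trans (degree_add_le _ _)
        apply max_le
        · apply le_trans (degree_mul_le _ _)
          rw [degree_X_sub_C]
          push_cast
          exact add_le_add_left ha _
        · exact le_trans degree_C_le (by exact_mod_cast Nat.zero_le _)
      have hb₁deg : b₁.degree ≤ ((N+1 : ℕ) : WithBot ℕ) := by
        apply le_trans (degree_mul_le _ _)
        rw [degree_X_sub_C]
        push_cast
        exact add_le_add_left hb _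
      -- value at x is exactly 1
      have hval : a₁.eval x / b₁.eval x = 1 := by
        have hbx : b.eval x ≠ 0 := hb0 x hxK
        have hxw : x - w = -(η:ℝ) := by rw [hw]; ring
        rw [ha₁eval, hb₁eval, hxw, hd]
        rw [div_eq_one_iff_eq (by
          apply mul_ne_zero hbx
          simp only [ne_eq, neg_eq_zero]
          exact_mod_cast ne_of_gt hη0)]
        ring
      -- perturbation bound away from x
      have hpert : ∀ z ∈ K, z ≠ x →
          ‖a₁.eval z / b₁.eval z - a.eval z / b.eval z‖ ≤ ε/2 := by
        intro z hz hzx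
        have hbz : b.eval z ≠ 0 := hb0 z hz
        have hzw : z - w ≠ 0 := sub_ne_zero.2 (fun h => hwK (h ▸ hz))
        have heq : a₁.eval z / b₁.eval z - a.eval z / b.eval z
            = d / (b.eval z * (z - w)) := by
          rw [ha₁eval, hb₁eval]
          field_simp
          ring
        rw [heq, norm_div]
        have hDeq : ‖b.eval z * (z - w)‖ = ‖b.eval z‖ * ‖z - w‖ := norm_mul _ _
        rw [hDeq]
        have hzwlb : ρ/2 ≤ ‖z - w‖ := by
          have h1 : ρ ≤ ‖z - x‖ := hisox z hz hzx
          have h2 : ‖z - x‖ ≤ ‖z - w‖ + ‖w - x‖ := by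
            have h3 : z - x = (z - w) + (w - x) := by ring
            rw [h3]
            exact norm_add_le _ _
          have hwx2 : ‖w - x‖ = η := by
            rw [hw]
            simp only [add_sub_cancel_left]
            rw [Complex.norm_real, Real.norm_of_nonneg (le_of_lt hη0)]
          rw [hwx2] at h2
          linarith
        have hdle : ‖d‖ ≤ η * (Cx+1) := by
          rw [hd, norm_mul, Complex.norm_real, Real.norm_of_nonneg (le_of_lt hη0)]
          have : ‖a.eval x - b.eval x‖ = Cx := rfl
          rw [this]
          nlinarith
        have hD : 0 < ‖b.eval z‖ * ‖z - w‖ := by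
          apply mul_pos (norm_pos_iff.2 hbz) (norm_pos_iff.2 hzw)
        rw [div_le_iff₀ hD]
        have hcb : c ≤ ‖b.eval z‖ := hx₀min z hz
        have hthis : η * (Cx + 1) ≤ ε*c*ρ/4 := by
          rw [le_div_iff₀ (by positivity : (0:ℝ) < 4*(Cx+1))] at hη2
          nlinarith
        have h5 : c*(ρ/2) ≤ ‖b.eval z‖*‖z - w‖ :=
          mul_le_mul hcb hzwlb (by linarith) (norm_nonneg _)
        nlinarith [mul_le_mul_of_nonneg_left h5 (le_of_lt (half_pos hε))]
      -- new goodness hypothesis on K \ S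
      have hgood₁ : ∀ z ∈ K, z ∉ S → ‖a₁.eval z / b₁.eval z - signEF E z‖ ≤ T + ε/2 := by
        intro z hz hzS
        by_cases hzx : z = x
        · subst hzx
          rw [hval, signEF, if_neg hxE]
          simp only [sub_self, norm_zero]
          linarith
        · have h1 := hgood z hz (by simp [hzx, hzS])
          have h2 := hpert z hz hzx
          calc ‖a₁.eval z / b₁.eval z - signEF E z‖
              = ‖(a.eval z / b.eval z - signEF E z)
                + (a₁.eval z / b₁.eval z - a.eval z / b.eval z)‖ := by ring_nf
            _ ≤ ‖a.eval z / b.eval z - signEF E z‖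
                + ‖a₁.eval z / b₁.eval z - a.eval z / b.eval z‖ := norm_add_le _ _
            _ ≤ T + ε/2 := by linarith
      have hiso₁ : ∀ y ∈ S, y ∈ K ∧ y ∉ E ∧ ∃ ρ > 0, ∀ z ∈ K, z ≠ y → ρ ≤ ‖z - y‖ :=
        fun y hy => hiso y (Finset.mem_insert_of_mem hy)
      have hcard : (N+1) + S.card ≤ n := by
        rw [Finset.card_insert_of_notMem hxS] at hN
        omega
      obtain ⟨a', b', h1, h2, h3, h4⟩ :=
        IH a₁ b₁ (T + ε/2) (ε/2) (N+1) n (by linarith) (by linarith)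
          ha₁deg hb₁deg hcard hb₁0 hgood₁ hiso₁
      exact ⟨a', b', h1, h2, h3, fun z hz => le_trans (h4 z hz) (by linarith)⟩


lemma finset_sep (S : Finset ℂ) (x : ℂ) : ∃ ρ > (0:ℝ), ∀ z ∈ S, z ≠ x → ρ ≤ ‖z - x‖ := by
  induction S using Finset.induction_on with
  | empty => exact ⟨1, one_pos, by simp⟩
  | @insert y S hy IH =>
      obtain ⟨ρ, hρ, hIH⟩ := IH
      by_cases hyx : y = x
      · refine ⟨ρ, hρ, ?_⟩
        intro z hz hzx
        rcases Finset.mem_insert.1 hz with h | h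
        · exact absurd (h.trans hyx) hzx
        · exact hIH z h hzx
      · refine ⟨min ρ ‖y - x‖, lt_min hρ (norm_pos_iff.2 (sub_ne_zero.2 hyx)), ?_⟩
        intro z hz hzx
        rcases Finset.mem_insert.1 hz with h | h
        · subst h; exact min_le_right _ _
        · exact le_trans (min_le_left _ _) (hIH z h hzx)

lemma tau_le_aux (n : ℕ) (E F : Set ℂ) (hE : IsCompact E) (hF : IsCompact F)
    (hEne : E.Nonempty) (hFinf : F.Infinite) (hdisj : Disjoint E F)
    (p q : Polynomial ℂ) (hpdeg : p.degree ≤ (n : WithBot ℕ)) (hqdeg : q.degree ≤ (n : WithBot ℕ))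
    (hq0 : ∀ z ∈ E, q.eval z ≠ 0) (hF1 : ∀ z ∈ F, ‖q.eval z‖ ≤ ‖p.eval z‖)
    (s : ℝ) (hs0 : 0 ≤ s) (hsE : ∀ z ∈ E, ‖p.eval z‖ ≤ s * ‖q.eval z‖)
    (u : ℝ) (hsu : s < u) (hu1 : u < 1) {ε : ℝ} (hε : 0 < ε) :
    zoloTau n E F ≤ 2 * Real.sqrt u / (1 + u) + ε := by
  classical
  set K : Set ℂ := E ∪ F with hKdef
  have hK : IsCompact K := hE.union hF
  have hKne : K.Nonempty := hEne.inl
  -- p and q are nonzero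
  have hq0' : q ≠ 0 := by
    rintro rfl
    obtain ⟨z, hz⟩ := hEne
    exact hq0 z hz (by simp)
  have hp0 : p ≠ 0 := by
    rintro rfl
    apply hq0'
    apply q.eq_zero_of_infinite_isRoot
    apply hFinf.mono
    intro z hz
    have := hF1 z hz
    simp only [eval_zero, norm_zero] at this
    have : ‖q.eval z‖ = 0 := le_antisymm this (norm_nonneg _)
    simpa [Polynomial.IsRoot] using norm_eq_zero.1 this
  -- strip common zeros in F
  obtain ⟨P, Q, S, hP0, hQ0, hSF, hPc, hQc, hEc, hFc, hnoc⟩ :=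
    strip_common E F s hdisj p.natDegree p q ∅ hp0 hq0' le_rfl (by simp)
      (fun z hz => ⟨hq0 z hz, hsE z hz⟩) (fun z hz _ => hF1 z hz)
  simp only [Finset.card_empty, add_zero] at hPc hQc
  have hpn : p.natDegree ≤ n := natDegree_le_iff_degree_le.2 hpdeg
  have hqn : q.natDegree ≤ n := natDegree_le_iff_degree_le.2 hqdeg
  have hPn : P.natDegree + S.card ≤ n := le_trans hPc hpn
  have hQn : Q.natDegree + S.card ≤ n := le_trans hQc hqn
  -- choose a generic k
  have hIoo : (Set.Ioo (Real.sqrt s) (Real.sqrt u)).Infinite :=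
    Set.Ioo_infinite (Real.sqrt_lt_sqrt hs0 hsu)
  set BadF : Finset ℝ := S.image (fun z => (-(P.eval z) / (Q.eval z)).re) with hBadF
  obtain ⟨k, hkmem⟩ := (hIoo.diff BadF.finite_toSet).nonempty
  obtain ⟨hkIoo, hkBad⟩ := hkmem
  have hk0 : 0 < k := lt_of_le_of_lt (Real.sqrt_nonneg s) hkIoo.1
  have hsk2 : s < k^2 := by
    calc s = (Real.sqrt s)^2 := (Real.sq_sqrt hs0).symm
      _ < k^2 := by
          apply pow_lt_pow_left₀ hkIoo.1 (Real.sqrt_nonneg s)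
          norm_num
  have hk2u : k^2 < u := by
    calc k^2 < (Real.sqrt u)^2 := by
          apply pow_lt_pow_left₀ hkIoo.2 (le_of_lt hk0)
          norm_num
      _ = u := Real.sq_sqrt (le_trans hs0 (le_of_lt hsu))
  have hk21 : k^2 < 1 := lt_trans hk2u hu1
  have hk1 : k ≤ 1 := by nlinarith
  set s' : ℝ := k^2 with hs'def
  have hs'0 : 0 ≤ s' := sq_nonneg k
  have hs'1 : s' ≤ 1 := le_of_lt hk21
  have hs'k : s' ≤ k := by nlinarith
  have hss' : s ≤ s' := le_of_lt hsk2
  have hsltk : s < k := lt_of_lt_of_le hsk2 hs'k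
  set t' : ℝ := 2*k/(1+s') with ht'def
  have ht'0 : 0 ≤ t' := by positivity
  have ht'id : t' * (1+s') = 2*k := by
    rw [ht'def]; field_simp
  have ht'le : t' ≤ 2 * Real.sqrt u / (1 + u) := by
    have h1 : k ≤ Real.sqrt u := le_of_lt hkIoo.2
    have h2 : Real.sqrt u ≤ 1 := by
      rw [show (1:ℝ) = Real.sqrt 1 by simp]
      exact Real.sqrt_le_sqrt (le_of_lt hu1)
    have := Hmono (le_of_lt hk0) h1 h2
    calc t' = 2*k/(1+k^2) := rfl
      _ ≤ 2*Real.sqrt u/(1+(Real.sqrt u)^2) := this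
      _ = 2*Real.sqrt u/(1+u) := by rw [Real.sq_sqrt (le_trans hs0 (le_of_lt hsu))]
  -- the Möbius-transformed pair
  set p' : Polynomial ℂ := C (((1-s':ℝ)) : ℂ) * (P - C ((k:ℝ) : ℂ) * Q) with hp'def
  set q' : Polynomial ℂ := C (((1+s':ℝ)) : ℂ) * (P + C ((k:ℝ) : ℂ) * Q) with hq'def
  have hp'eval : ∀ z : ℂ, p'.eval z = (((1-s':ℝ)) : ℂ) * (P.eval z - ((k:ℝ) : ℂ) * Q.eval z) := by
    intro z; simp [hp'def]
  have hq'eval : ∀ z : ℂ, q'.eval z = (((1+s':ℝ)) : ℂ) * (P.eval z + ((k:ℝ) : ℂ) * Q.eval z) := by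
    intro z; simp [hq'def]
  have hPdeg : P.degree ≤ ((n - S.card : ℕ) : WithBot ℕ) :=
    natDegree_le_iff_degree_le.1 (by omega)
  have hQdeg : Q.degree ≤ ((n - S.card : ℕ) : WithBot ℕ) :=
    natDegree_le_iff_degree_le.1 (by omega)
  have hp'deg : p'.degree ≤ ((n - S.card : ℕ) : WithBot ℕ) :=
    le_trans (degree_C_mul_le' _ _) (le_trans (degree_sub_le _ _)
      (max_le hPdeg (le_trans (degree_C_mul_le' _ _) hQdeg)))
  have hq'deg : q'.degree ≤ ((n - S.card : ℕ) : WithBot ℕ) :=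
    le_trans (degree_C_mul_le' _ _) (le_trans (degree_add_le _ _)
      (max_le hPdeg (le_trans (degree_C_mul_le' _ _) hQdeg)))
  have h1s'ne : (((1+s':ℝ)) : ℂ) ≠ 0 := by
    rw [Ne, Complex.ofReal_eq_zero]
    intro h; linarith
  -- q' has no zeros on K
  have hq'0 : ∀ z ∈ K, q'.eval z ≠ 0 := by
    intro z hz
    rw [hq'eval]
    apply mul_ne_zero h1s'ne
    rcases hz with hzE | hzF
    · obtain ⟨hQz, hPb⟩ := hEc z hzE
      intro hzero
      have hPz : P.eval z = -((k:ℝ) : ℂ) * Q.eval z := by linear_combination hzero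
      have : ‖P.eval z‖ = k * ‖Q.eval z‖ := by
        rw [hPz, norm_mul, norm_neg, Complex.norm_real, Real.norm_of_nonneg (le_of_lt hk0)]
      have hQpos : 0 < ‖Q.eval z‖ := norm_pos_iff.2 hQz
      nlinarith [hPb]
    · by_cases hQz : Q.eval z = 0
      · have hPz : P.eval z ≠ 0 := by
          intro hPz
          exact hnoc z hzF ⟨hPz, hQz⟩
        rw [hQz]
        simpa using hPz
      · by_cases hzS : z ∈ S
        · intro hzero
          apply hkBad
          have hkc : ((k:ℝ) : ℂ) = -(P.eval z) / (Q.eval z) := by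
            field_simp
            linear_combination hzero
          have : ((-(P.eval z) / (Q.eval z)).re) = k := by rw [← hkc]; simp
          rw [hBadF]
          simp only [Finset.coe_image, Set.mem_image, Finset.mem_coe]
          exact ⟨z, hzS, this⟩
        · intro hzero
          have hQP := hFc z hzF hzS
          have hPz : P.eval z = -((k:ℝ) : ℂ) * Q.eval z := by linear_combination hzero
          have : ‖P.eval z‖ = k * ‖Q.eval z‖ := by
            rw [hPz, norm_mul, norm_neg, Complex.norm_real, Real.norm_of_nonneg (le_of_lt hk0)]
          have hQpos : 0 < ‖Q.eval z‖ := norm_pos_iff.2 hQz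
          nlinarith
  -- bad set
  set Sbad : Finset ℂ := S.filter (fun z => ¬(‖p'.eval z / q'.eval z - signEF E z‖ ≤ t'))
    with hSbad
  -- goodness away from Sbad
  have hgood : ∀ z ∈ K, z ∉ Sbad → ‖p'.eval z / q'.eval z - signEF E z‖ ≤ t' := by
    intro z hz hznb
    by_cases hzS : z ∈ S
    · by_contra hbad
      exact hznb (Finset.mem_filter.2 ⟨hzS, hbad⟩)
    rcases hz with hzE | hzF
    · -- on E
      obtain ⟨hQz, hPb⟩ := hEc z hzE
      have hden : q'.eval z ≠ 0 := hq'0 z (Or.inl hzE)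
      rw [signEF, if_pos hzE]
      have key : p'.eval z / q'.eval z - (-1) = (p'.eval z + q'.eval z) / q'.eval z := by
        field_simp
        ring
      rw [key, norm_div, div_le_iff₀ (norm_pos_iff.2 hden)]
      have hnum : p'.eval z + q'.eval z
          = 2 * (P.eval z + ((k*s' : ℝ) : ℂ) * Q.eval z) := by
        rw [hp'eval, hq'eval]
        push_cast
        ring
      have hA := lemA1 (rfl : k^2 = s') (le_of_lt hk0) hs0 hss' hs'1 (P.eval z) (Q.eval z) hPb
      rw [hnum, norm_mul]
      have hq'n : ‖q'.eval z‖ = (1+s') * ‖P.eval z + ((k:ℝ) : ℂ) * Q.eval z‖ := by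
        rw [hq'eval, norm_mul, Complex.norm_real, Real.norm_of_nonneg (by linarith)]
      rw [hq'n]
      have h2 : ‖(2:ℂ)‖ = 2 := by norm_num
      rw [h2]
      calc 2 * ‖P.eval z + ((k*s' : ℝ) : ℂ) * Q.eval z‖
          ≤ 2 * (k * ‖P.eval z + ((k:ℝ) : ℂ) * Q.eval z‖) := by linarith
        _ = t' * ((1+s') * ‖P.eval z + ((k:ℝ) : ℂ) * Q.eval z‖) := by
            linear_combination (-‖P.eval z + ((k:ℝ) : ℂ) * Q.eval z‖) * ht'id
    · -- on F, z ∉ S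
      have hQP := hFc z hzF hzS
      have hzE : z ∉ E := fun hzE => (hdisj.ne_of_mem hzE hzF) rfl
      have hden : q'.eval z ≠ 0 := hq'0 z (Or.inr hzF)
      rw [signEF, if_neg hzE]
      have key : p'.eval z / q'.eval z - 1 = (p'.eval z - q'.eval z) / q'.eval z := by
        field_simp
      rw [key, norm_div, div_le_iff₀ (norm_pos_iff.2 hden)]
      have hnum : p'.eval z - q'.eval z
          = -2 * (((s' : ℝ) : ℂ) * P.eval z + ((k:ℝ) : ℂ) * Q.eval z) := by
        rw [hp'eval, hq'eval]
        push_cast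
        ring
      have hA := lemA2 (rfl : k^2 = s') (le_of_lt hk0) hs'1 (P.eval z) (Q.eval z) hQP
      rw [hnum, norm_mul]
      have hq'n : ‖q'.eval z‖ = (1+s') * ‖P.eval z + ((k:ℝ) : ℂ) * Q.eval z‖ := by
        rw [hq'eval, norm_mul, Complex.norm_real, Real.norm_of_nonneg (by linarith)]
      rw [hq'n]
      have h2 : ‖(-2:ℂ)‖ = 2 := by norm_num
      rw [h2]
      calc 2 * ‖((s' : ℝ) : ℂ) * P.eval z + ((k:ℝ) : ℂ) * Q.eval z‖
          ≤ 2 * (k * ‖P.eval z + ((k:ℝ) : ℂ) * Q.eval z‖) := by linarith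
        _ = t' * ((1+s') * ‖P.eval z + ((k:ℝ) : ℂ) * Q.eval z‖) := by
            linear_combination (-‖P.eval z + ((k:ℝ) : ℂ) * Q.eval z‖) * ht'id
  -- isolation of bad points
  have hiso : ∀ x ∈ Sbad, x ∈ K ∧ x ∉ E ∧ ∃ ρ > (0:ℝ), ∀ z ∈ K, z ≠ x → ρ ≤ ‖z - x‖ := by
    intro x hx
    obtain ⟨hxS, hbadx⟩ := Finset.mem_filter.1 hx
    have hxF : x ∈ F := hSF hxS
    have hxE : x ∉ E := fun hxE => (hdisj.ne_of_mem hxE hxF) rfl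
    have hxK : x ∈ K := Or.inr hxF
    refine ⟨hxK, hxE, ?_⟩
    rw [signEF, if_neg hxE] at hbadx
    have hlt : t' < ‖p'.eval x / q'.eval x - 1‖ := not_le.1 hbadx
    have hcont : ContinuousAt (fun z => ‖p'.eval z / q'.eval z - (1:ℂ)‖) x := by
      apply ContinuousAt.norm
      apply ContinuousAt.sub _ continuousAt_const
      exact ContinuousAt.div p'.continuous.continuousAt q'.continuous.continuousAt
        (hq'0 x hxK)
    have hnb : {z : ℂ | t' < ‖p'.eval z / q'.eval z - (1:ℂ)‖} ∈ nhds x :=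
      hcont (Ioi_mem_nhds hlt)
    obtain ⟨ρC, hρC, hballC⟩ := Metric.mem_nhds_iff.1 hnb
    have hnbE : Eᶜ ∈ nhds x := hE.isClosed.isOpen_compl.mem_nhds hxE
    obtain ⟨ρE, hρE, hballE⟩ := Metric.mem_nhds_iff.1 hnbE
    obtain ⟨ρS, hρS, hsepS⟩ := finset_sep S x
    refine ⟨min (min ρC ρE) ρS, by positivity, ?_⟩
    intro z hz hzx
    by_contra hlt2
    push_neg at hlt2
    have hdist : dist z x = ‖z - x‖ := by
      rw [Complex.dist_eq]
    have hzballC : z ∈ Metric.ball x ρC := by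
      rw [Metric.mem_ball, hdist]
      calc ‖z - x‖ < min (min ρC ρE) ρS := hlt2
        _ ≤ ρC := le_trans (min_le_left _ _) (min_le_left _ _)
    have hzballE : z ∈ Metric.ball x ρE := by
      rw [Metric.mem_ball, hdist]
      calc ‖z - x‖ < min (min ρC ρE) ρS := hlt2
        _ ≤ ρE := le_trans (min_le_left _ _) (min_le_right _ _)
    have hzE : z ∉ E := hballE hzballE
    have hzF : z ∈ F := hz.resolve_left hzE
    have hzS : z ∉ S := by
      intro hzS
      have := hsepS z hzS hzx
      have h2 : min (min ρC ρE) ρS ≤ ρS := min_le_right _ _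
      linarith
    have hzSbad : z ∉ Sbad := fun h => hzS (Finset.mem_filter.1 h).1
    have hgz := hgood z hz hzSbad
    rw [signEF, if_neg hzE] at hgz
    have := hballC hzballC
    simp only [Set.mem_setOf_eq] at this
    linarith
  -- apply the correction lemma
  obtain ⟨a', b', ha'deg, hb'deg, hb'0, hbound⟩ :=
    correction E K hK hKne Sbad p' q' t' ε (n - S.card) n hε ht'0 hp'deg hq'deg
      (by
        have hcard : Sbad.card ≤ S.card := Finset.card_le_card (Finset.filter_subset _ _)
        omega)
      hq'0 hgood hiso
  -- conclude
  have hbdd : BddBelow {t : ℝ | ∃ p q : Polynomial ℂ, p.degree ≤ (n : WithBot ℕ)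
      ∧ q.degree ≤ (n : WithBot ℕ) ∧
      (∀ z ∈ E ∪ F, q.eval z ≠ 0) ∧
      t = sSup ((fun z => ‖p.eval z / q.eval z - signEF E z‖) '' (E ∪ F))} :=
    ⟨0, fun x hx => tau_mem_nonneg hE hF hEne hx⟩
  have hmem : sSup ((fun z => ‖a'.eval z / b'.eval z - signEF E z‖) '' (E ∪ F))
      ∈ {t : ℝ | ∃ p q : Polynomial ℂ, p.degree ≤ (n : WithBot ℕ) ∧ q.degree ≤ (n : WithBot ℕ) ∧
      (∀ z ∈ E ∪ F, q.eval z ≠ 0) ∧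
      t = sSup ((fun z => ‖p.eval z / q.eval z - signEF E z‖) '' (E ∪ F))} :=
    ⟨a', b', ha'deg, hb'deg, hb'0, rfl⟩
  calc zoloTau n E F ≤ sSup ((fun z => ‖a'.eval z / b'.eval z - signEF E z‖) '' (E ∪ F)) :=
        csInf_le hbdd hmem
    _ ≤ t' + ε := csSup_le (hKne.image _) (by rintro y ⟨z, hz, rfl⟩; exact hbound z hz)
    _ ≤ 2 * Real.sqrt u / (1 + u) + ε := add_le_add_left ht'le ε



/-- The minimal values of the third and fourth Zolotarev problems satisfy
`τ_n = 2√σ_n/(1+σ_n)` and, equivalently, `σ_n = (τ_n/(1+√(1-τ_n²)))²`. -/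
theorem zolotarev_minimal_values_relation (n : ℕ) (E F : Set ℂ)
    (hE : IsCompact E) (hF : IsCompact F)
    (hEne : E.Nonempty) (hFne : F.Nonempty)
    (hEinf : E.Infinite) (hFinf : F.Infinite)
    (hdisj : Disjoint E F) :
    zoloTau n E F = 2 * Real.sqrt (zoloSigma n E F) / (1 + zoloSigma n E F) ∧
    zoloSigma n E F =
      (zoloTau n E F / (1 + Real.sqrt (1 - (zoloTau n E F) ^ 2))) ^ 2 := by
  have hσne : {s : ℝ | ∃ p q : Polynomial ℂ, p.degree ≤ (n : WithBot ℕ) ∧ q.degree ≤ (n : WithBot ℕ) ∧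
      (∀ z ∈ E, q.eval z ≠ 0) ∧ (∀ z ∈ F, ‖q.eval z‖ ≤ ‖p.eval z‖) ∧
      s = sSup ((fun z => ‖p.eval z / q.eval z‖) '' E)}.Nonempty := ⟨1, one_mem_sigma hEne⟩
  have hτne : {t : ℝ | ∃ p q : Polynomial ℂ, p.degree ≤ (n : WithBot ℕ) ∧ q.degree ≤ (n : WithBot ℕ) ∧
      (∀ z ∈ E ∪ F, q.eval z ≠ 0) ∧
      t = sSup ((fun z => ‖p.eval z / q.eval z - signEF E z‖) '' (E ∪ F))}.Nonempty :=
    ⟨1, one_mem_tau hEne⟩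
  have hσbdd : BddBelow {s : ℝ | ∃ p q : Polynomial ℂ, p.degree ≤ (n : WithBot ℕ) ∧ q.degree ≤ (n : WithBot ℕ) ∧
      (∀ z ∈ E, q.eval z ≠ 0) ∧ (∀ z ∈ F, ‖q.eval z‖ ≤ ‖p.eval z‖) ∧
      s = sSup ((fun z => ‖p.eval z / q.eval z‖) '' E)} :=
    ⟨0, fun x hx => sigma_mem_nonneg hE hEne hx⟩
  have hτbdd : BddBelow {t : ℝ | ∃ p q : Polynomial ℂ, p.degree ≤ (n : WithBot ℕ) ∧ q.degree ≤ (n : WithBot ℕ) ∧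
      (∀ z ∈ E ∪ F, q.eval z ≠ 0) ∧
      t = sSup ((fun z => ‖p.eval z / q.eval z - signEF E z‖) '' (E ∪ F))} :=
    ⟨0, fun x hx => tau_mem_nonneg hE hF hEne hx⟩
  have hσ0 : 0 ≤ zoloSigma n E F := le_csInf hσne (fun x hx => sigma_mem_nonneg hE hEne hx)
  have hτ0 : 0 ≤ zoloTau n E F := le_csInf hτne (fun x hx => tau_mem_nonneg hE hF hEne hx)
  have hσ1 : zoloSigma n E F ≤ 1 := csInf_le hσbdd (one_mem_sigma hEne)
  have hτ1 : zoloTau n E F ≤ 1 := csInf_le hτbdd (one_mem_tau hEne)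
  -- Claim B : σ ≤ g(τ)
  have hgcont : Continuous gfun := by
    apply Continuous.pow
    apply Continuous.div continuous_id
    · apply continuous_const.add
      apply Real.continuous_sqrt.comp
      continuity
    · intro x
      positivity
  have hB : zoloSigma n E F ≤ gfun (zoloTau n E F) := by
    by_cases hτlt : zoloTau n E F < 1
    · have key : ∀ t, zoloTau n E F < t → t < 1 → zoloSigma n E F ≤ gfun t := by
        intro t hτt ht1
        obtain ⟨t₀, ht₀mem, ht₀lt⟩ := exists_lt_of_csInf_lt hτne hτt
        obtain ⟨p, q, hp, hq, hq0, ht₀⟩ := ht₀mem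
        have htt : ∀ z ∈ E ∪ F, ‖p.eval z / q.eval z - signEF E z‖ ≤ t := by
          intro z hz
          have h1 := le_sSup_tau (E := E) p q (hE.union hF) hq0 hz
          rw [← ht₀] at h1
          exact le_trans h1 (le_of_lt ht₀lt)
        exact sigma_le_gfun hE hF hEne hdisj (le_trans hτ0 (le_of_lt hτt)) ht1 p q hp hq hq0 htt
      have htend : Filter.Tendsto gfun (nhdsWithin (zoloTau n E F) (Set.Ioi (zoloTau n E F)))
          (nhds (gfun (zoloTau n E F))) :=
        (hgcont.continuousAt).continuousWithinAt
      apply ge_of_tendsto htend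
      filter_upwards [Ioo_mem_nhdsGT_of_mem ⟨le_refl _, hτlt⟩] with t ht
      exact key t ht.1 ht.2
    · have hτeq : zoloTau n E F = 1 := le_antisymm hτ1 (not_lt.1 hτlt)
      rw [hτeq]
      have : gfun 1 = 1 := by
        rw [gfun]
        norm_num
      rw [this]
      exact hσ1
  -- Claim A : τ ≤ h(σ)
  have hA : zoloTau n E F ≤ hfun (zoloSigma n E F) := by
    by_cases hσlt : zoloSigma n E F < 1
    · have key : ∀ v, zoloSigma n E F < v → v < 1 → zoloTau n E F ≤ hfun v := by
        intro v hσv hv1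
        apply le_of_forall_pos_le_add
        intro ε hε
        obtain ⟨s, hsmem, hslt⟩ := exists_lt_of_csInf_lt hσne hσv
        have hs0 : 0 ≤ s := sigma_mem_nonneg hE hEne hsmem
        obtain ⟨p, q, hp, hq, hq0, hF1, hs⟩ := hsmem
        have hsE : ∀ z ∈ E, ‖p.eval z‖ ≤ s * ‖q.eval z‖ := by
          intro z hz
          have h1 := le_sSup_ratio p q hE hq0 hz
          rw [← hs] at h1
          rw [norm_div, div_le_iff₀ (norm_pos_iff.2 (hq0 z hz))] at h1
          exact h1
        have := tau_le_aux n E F hE hF hEne hFinf hdisj p q hp hq hq0 hF1 s hs0 hsE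
          v hslt hv1 hε
        rw [hfun]
        exact this
      have htend : Filter.Tendsto hfun (nhdsWithin (zoloSigma n E F) (Set.Ioi (zoloSigma n E F)))
          (nhds (hfun (zoloSigma n E F))) := by
        have hcont : ContinuousAt hfun (zoloSigma n E F) := by
          apply ContinuousAt.div
          · exact (continuous_const.mul Real.continuous_sqrt).continuousAt
          · exact (continuous_const.add continuous_id).continuousAt
          · positivity
        exact hcont.continuousWithinAt
      apply ge_of_tendsto htend
      filter_upwards [Ioo_mem_nhdsGT_of_mem ⟨le_refl _, hσlt⟩] with v hv
      exact key v hv.1 hv.2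
    · have hσeq : zoloSigma n E F = 1 := le_antisymm hσ1 (not_lt.1 hσlt)
      rw [hσeq]
      have : hfun 1 = 1 := by
        rw [hfun, Real.sqrt_one]
        norm_num
      rw [this]
      exact hτ1
  -- combine
  have hgτ1 : gfun (zoloTau n E F) ≤ 1 := gfun_le_one hτ0 hτ1
  have hA2 : hfun (zoloSigma n E F) ≤ zoloTau n E F := by
    calc hfun (zoloSigma n E F) ≤ hfun (gfun (zoloTau n E F)) :=
          hfun_mono hσ0 hB hgτ1
      _ = zoloTau n E F := hfun_gfun hτ0 hτ1
  have hτeq : zoloTau n E F = hfun (zoloSigma n E F) := le_antisymm hA hA2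
  have hσeq : zoloSigma n E F = gfun (zoloTau n E F) := by
    apply le_antisymm hB
    rw [hτeq, gfun_hfun hσ0 hσ1]
  constructor
  · rw [hτeq, hfun]
  · rw [hσeq] 
    rw [gfun]

end Zolo
end

section
/- Let n ≥ 0 and let E, F be disjoint nonempty compact subsets of ℂ. Suppose r* = p/q is a rational function of degree at most n with q nonvanishing on E ∪ F, min_{z∈F} |r*(z)| = 1, and sup_{z∈E} |r*(z)| = σ_n, where 0 < σ_n < 1, and let r̂(z) = ((1−σ_n)/(1+σ_n)) · (r*(z) − √σ_n)/(r*(z) + √σ_n) and τ_n = 2√σ_n/(1+σ_n). Then the set of extremal points M = {z ∈ E ∪ F : |r̂(z) − sign_{E/F}(z)| = τ_n} equals the union of M₁ = {z ∈ E : |r*(z)| = σ_n} and M₂ = {z ∈ F : |r*(z)| = 1}. -/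
open Polynomial Set

lemma zolo_normsq_E (σ s : ℝ) (hσ0 : 0 < σ) (hσ1 : σ < 1) (hs2 : s ^ 2 = σ) (w : ℂ) :
    Complex.normSq (w + ((s * σ : ℝ) : ℂ)) = σ * Complex.normSq (w + (s : ℝ)) ↔
      Complex.normSq w = σ ^ 2 := by
  simp only [Complex.normSq_apply, Complex.add_re, Complex.add_im, Complex.ofReal_re,
    Complex.ofReal_im]
  constructor <;> intro h
  · have h' : (1 - σ) * (w.re ^ 2 + w.im ^ 2 - σ ^ 2) = 0 := by
      linear_combination h + (σ - σ ^ 2) * hs2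
    rcases mul_eq_zero.mp h' with h0 | h0
    · linarith
    · ring_nf; ring_nf at h0; linarith
  · ring_nf; ring_nf at h; nlinarith [hs2, h]

lemma zolo_normsq_F (σ s : ℝ) (hσ0 : 0 < σ) (hσ1 : σ < 1) (hs2 : s ^ 2 = σ) (w : ℂ) :
    Complex.normSq ((σ : ℂ) * w + ((s : ℝ) : ℂ)) = σ * Complex.normSq (w + (s : ℝ)) ↔
      Complex.normSq w = 1 := by
  simp only [Complex.normSq_apply, Complex.add_re, Complex.add_im, Complex.mul_re,
    Complex.mul_im, Complex.ofReal_re, Complex.ofReal_im]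
  constructor <;> intro h
  · have h' : (σ - 1) * σ * (w.re ^ 2 + w.im ^ 2 - 1) = 0 := by
      linear_combination h + (σ - 1) * hs2
    rcases mul_eq_zero.mp h' with h0 | h0
    · rcases mul_eq_zero.mp h0 with h1 | h1
      · linarith
      · linarith
    · ring_nf; ring_nf at h0; linarith
  · linear_combination σ * (σ - 1) * h + (1 - σ) * hs2

lemma zolo_keyE (σ s : ℝ) (hσ0 : 0 < σ) (hσ1 : σ < 1) (hs2 : s ^ 2 = σ) (hs0 : 0 < s)
    (w : ℂ) :
    ‖(((1 - σ) / (1 + σ) : ℝ) : ℂ) * (w - (s : ℂ)) / (w + (s : ℂ)) + 1‖ = 2 * s / (1 + σ) ↔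
      ‖w‖ = σ := by
  have hs1 : s < 1 := by nlinarith
  have h1σ : (0 : ℝ) < 1 + σ := by linarith
  by_cases hw : w + (s : ℂ) = 0
  · have hwv : w = -(s : ℂ) := by linear_combination hw
    rw [hw, div_zero, zero_add, norm_one, hwv, norm_neg, Complex.norm_real,
      Real.norm_eq_abs, abs_of_pos hs0]
    constructor <;> intro h <;> exfalso
    · have : 2 * s = 1 + σ := by field_simp at h; linarith
      nlinarith
    · nlinarith
  · have hne : ‖w + (s : ℂ)‖ ≠ 0 := norm_ne_zero_iff.mpr hw
    have h1c : (1 : ℂ) + (σ : ℂ) ≠ 0 := by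
      intro h; have := congrArg Complex.re h
      simp [Complex.ofReal_re] at this; linarith
    have hA : (((1 - σ) / (1 + σ) : ℝ) : ℂ) * (w - (s : ℂ)) / (w + (s : ℂ)) + 1 =
        ((2 / (1 + σ) : ℝ) : ℂ) * ((w + ((s * σ : ℝ) : ℂ)) / (w + (s : ℂ))) := by
      push_cast
      field_simp
      ring
    rw [hA, norm_mul, norm_div, Complex.norm_real, Real.norm_eq_abs,
      abs_of_pos (by positivity : (0:ℝ) < 2 / (1 + σ)),
      show (2 : ℝ) * s / (1 + σ) = 2 / (1 + σ) * s from by ring,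
      mul_right_inj' (by positivity : (2:ℝ) / (1 + σ) ≠ 0), div_eq_iff hne,
      ← sq_eq_sq₀ (norm_nonneg _) (by positivity : (0:ℝ) ≤ s * ‖w + (s:ℂ)‖),
      ← sq_eq_sq₀ (norm_nonneg _) hσ0.le]
    simp only [mul_pow, Complex.sq_norm, hs2]
    exact zolo_normsq_E σ s hσ0 hσ1 hs2 w

lemma zolo_keyF (σ s : ℝ) (hσ0 : 0 < σ) (hσ1 : σ < 1) (hs2 : s ^ 2 = σ) (hs0 : 0 < s)
    (w : ℂ) :
    ‖(((1 - σ) / (1 + σ) : ℝ) : ℂ) * (w - (s : ℂ)) / (w + (s : ℂ)) - 1‖ = 2 * s / (1 + σ) ↔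
      ‖w‖ = 1 := by
  have hs1 : s < 1 := by nlinarith
  have h1σ : (0 : ℝ) < 1 + σ := by linarith
  by_cases hw : w + (s : ℂ) = 0
  · have hwv : w = -(s : ℂ) := by linear_combination hw
    rw [hw, div_zero, zero_sub, norm_neg, norm_one, hwv, norm_neg, Complex.norm_real,
      Real.norm_eq_abs, abs_of_pos hs0]
    constructor <;> intro h <;> exfalso
    · have : 2 * s = 1 + σ := by field_simp at h; linarith
      nlinarith
    · nlinarith
  · have hne : ‖w + (s : ℂ)‖ ≠ 0 := norm_ne_zero_iff.mpr hw
    have h1c : (1 : ℂ) + (σ : ℂ) ≠ 0 := by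
      intro h; have := congrArg Complex.re h
      simp [Complex.ofReal_re] at this; linarith
    have hA : (((1 - σ) / (1 + σ) : ℝ) : ℂ) * (w - (s : ℂ)) / (w + (s : ℂ)) - 1 =
        -(((2 / (1 + σ) : ℝ) : ℂ) * (((σ : ℂ) * w + ((s : ℝ) : ℂ)) / (w + (s : ℂ)))) := by
      push_cast
      field_simp
      ring
    rw [hA, norm_neg, norm_mul, norm_div, Complex.norm_real, Real.norm_eq_abs,
      abs_of_pos (by positivity : (0:ℝ) < 2 / (1 + σ)),
      show (2 : ℝ) * s / (1 + σ) = 2 / (1 + σ) * s from by ring,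
      mul_right_inj' (by positivity : (2:ℝ) / (1 + σ) ≠ 0), div_eq_iff hne,
      ← sq_eq_sq₀ (norm_nonneg _) (by positivity : (0:ℝ) ≤ s * ‖w + (s:ℂ)‖),
      ← sq_eq_sq₀ (norm_nonneg _) (by norm_num : (0:ℝ) ≤ 1)]
    simp only [mul_pow, Complex.sq_norm, hs2, one_pow]
    exact zolo_normsq_F σ s hσ0 hσ1 hs2 w

/-- For a solution `r* = p/q` of the third Zolotarev problem with `0 < σ_n < 1`, and the
associated `r̂ = ((1-σ_n)/(1+σ_n))(r* - √σ_n)/(r* + √σ_n)` and `τ_n = 2√σ_n/(1+σ_n)`, the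
set of extremal points `M = {z ∈ E ∪ F : |r̂(z) - sign_{E/F}(z)| = τ_n}` equals the union
of `M₁ = {z ∈ E : |r*(z)| = σ_n}` and `M₂ = {z ∈ F : |r*(z)| = 1}`. -/
theorem zolotarev_extremal_sets (n : ℕ) (E F : Set ℂ)
    (hE : IsCompact E) (hF : IsCompact F)
    (hEne : E.Nonempty) (hFne : F.Nonempty)
    (hdisj : Disjoint E F)
    (p q : Polynomial ℂ) (hp : p.degree ≤ n) (hq : q.degree ≤ n)
    (hq0 : ∀ z ∈ E ∪ F, q.eval z ≠ 0)
    (r : ℂ → ℂ) (hr : ∀ z, r z = p.eval z / q.eval z)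
    (hmin : IsLeast ((fun z => ‖r z‖) '' F) 1)
    (σ : ℝ) (hσ : σ = zoloSigma n E F)
    (hsup : sSup ((fun z => ‖r z‖) '' E) = σ)
    (hσ0 : 0 < σ) (hσ1 : σ < 1)
    (rhat : ℂ → ℂ)
    (hrhat : ∀ z, rhat z =
      (((1 - σ) / (1 + σ) : ℝ) : ℂ) * (r z - (Real.sqrt σ : ℂ)) / (r z + (Real.sqrt σ : ℂ)))
    (τ : ℝ) (hτ : τ = 2 * Real.sqrt σ / (1 + σ)) :
    {z ∈ E ∪ F | ‖rhat z - signEF E z‖ = τ} =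
      {z ∈ E | ‖r z‖ = σ} ∪ {z ∈ F | ‖r z‖ = 1} := by
  have hs2 : Real.sqrt σ ^ 2 = σ := Real.sq_sqrt hσ0.le
  have hs0 : 0 < Real.sqrt σ := Real.sqrt_pos.mpr hσ0
  ext z
  simp only [Set.mem_setOf_eq, Set.mem_union]
  constructor
  · rintro ⟨hzEF, hz⟩
    rcases hzEF with hzE | hzF
    · left
      refine ⟨hzE, ?_⟩
      have hsign : signEF E z = -1 := by simp [signEF, hzE]
      rw [hrhat z, hsign, sub_neg_eq_add, hτ] at hz
      exact (zolo_keyE σ (Real.sqrt σ) hσ0 hσ1 hs2 hs0 (r z)).mp hz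
    · right
      refine ⟨hzF, ?_⟩
      have hzE : z ∉ E := Set.disjoint_right.mp hdisj hzF
      have hsign : signEF E z = 1 := by simp [signEF, hzE]
      rw [hrhat z, hsign, hτ] at hz
      exact (zolo_keyF σ (Real.sqrt σ) hσ0 hσ1 hs2 hs0 (r z)).mp hz
  · rintro (⟨hzE, hz⟩ | ⟨hzF, hz⟩)
    · refine ⟨Or.inl hzE, ?_⟩
      have hsign : signEF E z = -1 := by simp [signEF, hzE]
      rw [hrhat z, hsign, sub_neg_eq_add, hτ]
      exact (zolo_keyE σ (Real.sqrt σ) hσ0 hσ1 hs2 hs0 (r z)).mpr hz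
    · refine ⟨Or.inr hzF, ?_⟩
      have hzE : z ∉ E := Set.disjoint_right.mp hdisj hzF
      have hsign : signEF E z = 1 := by simp [signEF, hzE]
      rw [hrhat z, hsign, hτ]
      exact (zolo_keyF σ (Real.sqrt σ) hσ0 hσ1 hs2 hs0 (r z)).mpr hz
end

section
/- Let n ≥ 0 and let E, F be disjoint nonempty compact subsets of ℂ, both infinite. Then the minimal value τ_n of Problem Z4 satisfies 0 < τ_n ≤ 1. -/
open Polynomial Set

lemma interp_norm_le (n : ℕ) (s : Finset ℂ) (hs : s.card = n + 1)
    (f : Polynomial ℂ) (hf : f.degree ≤ n) (z : ℂ) (B : ℝ)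
    (hB : ∀ i ∈ s, ‖f.eval i‖ ≤ B) :
    ‖f.eval z‖ ≤ (∑ i ∈ s, ‖(Lagrange.basis s id i).eval z‖) * B := by
  have hdeg : f.degree < (s.card : ℕ) := by
    rw [hs]
    exact lt_of_le_of_lt hf (by exact_mod_cast Nat.lt_succ_self n)
  have hrep := Lagrange.eq_interpolate (Set.injOn_id (s : Set ℂ)) hdeg
  obtain ⟨i0, hi0⟩ : s.Nonempty := Finset.card_pos.mp (by omega)
  have hB0 : 0 ≤ B := le_trans (norm_nonneg _) (hB _ hi0)
  conv_lhs => rw [hrep]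
  have hint : Lagrange.interpolate s id (fun i => f.eval (id i)) =
      ∑ i ∈ s, Polynomial.C (f.eval i) * Lagrange.basis s id i := rfl
  rw [hint, eval_finset_sum]
  calc ‖∑ i ∈ s, (Polynomial.C (f.eval i) * Lagrange.basis s id i).eval z‖
      ≤ ∑ i ∈ s, ‖(Polynomial.C (f.eval i) * Lagrange.basis s id i).eval z‖ :=
        norm_sum_le _ _
    _ ≤ ∑ i ∈ s, ‖(Lagrange.basis s id i).eval z‖ * B := by
        refine Finset.sum_le_sum fun i hi => ?_
        rw [eval_mul, eval_C, norm_mul, mul_comm]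
        exact mul_le_mul_of_nonneg_left (hB i hi) (norm_nonneg _)
    _ = (∑ i ∈ s, ‖(Lagrange.basis s id i).eval z‖) * B := by rw [Finset.sum_mul]

/-- The minimal value `τ_n` of the fourth Zolotarev problem satisfies `0 < τ_n ≤ 1`. -/
theorem zoloTau_pos_le_one (n : ℕ) (E F : Set ℂ)
    (hE : IsCompact E) (hF : IsCompact F)
    (hEne : E.Nonempty) (hFne : F.Nonempty)
    (hEinf : E.Infinite) (hFinf : F.Infinite)
    (hdisj : Disjoint E F) :
    0 < zoloTau n E F ∧ zoloTau n E F ≤ 1 := by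
  set S := {t : ℝ | ∃ p q : Polynomial ℂ, p.degree ≤ n ∧ q.degree ≤ n ∧
    (∀ z ∈ E ∪ F, q.eval z ≠ 0) ∧
    t = sSup ((fun z => ‖p.eval z / q.eval z - signEF E z‖) '' (E ∪ F))} with hSdef
  have hKne : (E ∪ F).Nonempty := hEne.mono subset_union_left
  have hK : IsCompact (E ∪ F) := hE.union hF
  -- 1 ∈ S
  have h1 : (1 : ℝ) ∈ S := by
    refine ⟨0, 1, by simp, by simp, fun z _ => by simp, ?_⟩
    have himg : (fun z => ‖(0 : Polynomial ℂ).eval z / (1 : Polynomial ℂ).eval z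
        - signEF E z‖) '' (E ∪ F) = {1} := by
      apply Subset.antisymm
      · rintro _ ⟨z, _, rfl⟩
        simp only [eval_zero, eval_one, zero_div, zero_sub, norm_neg, mem_singleton_iff]
        exact norm_signEF E z
      · rintro x rfl
        refine ⟨hKne.choose, hKne.choose_spec, ?_⟩
        simp only [eval_zero, eval_one, zero_div, zero_sub, norm_neg]
        exact norm_signEF E _
    rw [himg, csSup_singleton]
  -- interpolation nodes
  obtain ⟨s, hsE, hscard⟩ := hEinf.exists_subset_card_eq (n + 1)
  obtain ⟨t, htF, htcard⟩ := hFinf.exists_subset_card_eq (n + 1)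
  set Λs : ℂ → ℝ := fun z => ∑ a ∈ s, ‖(Lagrange.basis s id a).eval z‖ with hΛs
  set Λt : ℂ → ℝ := fun z => ∑ b ∈ t, ‖(Lagrange.basis t id b).eval z‖ with hΛt
  set C : ℝ := (∑ b ∈ t, Λs b) + (∑ a ∈ s, Λt a) + 1 with hCdef
  have hΛs0 : ∀ z, 0 ≤ Λs z := fun z => Finset.sum_nonneg fun _ _ => norm_nonneg _
  have hΛt0 : ∀ z, 0 ≤ Λt z := fun z => Finset.sum_nonneg fun _ _ => norm_nonneg _
  have hsum1 : 0 ≤ ∑ b ∈ t, Λs b := Finset.sum_nonneg fun b _ => hΛs0 b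
  have hsum2 : 0 ≤ ∑ a ∈ s, Λt a := Finset.sum_nonneg fun a _ => hΛt0 a
  have hC1 : (1 : ℝ) ≤ C := by rw [hCdef]; linarith
  have hΛsC : ∀ b ∈ t, Λs b ≤ C := by
    intro b hb
    have := Finset.single_le_sum (f := Λs) (fun x _ => hΛs0 x) hb
    rw [hCdef]; linarith
  have hΛtC : ∀ a ∈ s, Λt a ≤ C := by
    intro a ha
    have := Finset.single_le_sum (f := Λt) (fun x _ => hΛt0 x) ha
    rw [hCdef]; linarith
  -- lower bound for every element of S
  have key : ∀ T ∈ S, 2 / (C + 1) ≤ T := by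
    rintro T ⟨p, q, hp, hq, hq0, rfl⟩
    set g : ℂ → ℝ := fun z => ‖p.eval z / q.eval z - signEF E z‖ with hg
    -- boundedness of the image
    obtain ⟨zp, _, hzp⟩ := hK.exists_isMaxOn hKne
      (Polynomial.continuous p).norm.continuousOn
    obtain ⟨zq, hzqm, hzq⟩ := hK.exists_isMinOn hKne
      (Polynomial.continuous q).norm.continuousOn
    have hzqpos : 0 < ‖q.eval zq‖ := norm_pos_iff.mpr (hq0 zq hzqm)
    have hbdd : BddAbove (g '' (E ∪ F)) := by
      refine ⟨‖p.eval zp‖ / ‖q.eval zq‖ + 1, ?_⟩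
      rintro _ ⟨z, hz, rfl⟩
      have h1 : ‖p.eval z / q.eval z - signEF E z‖ ≤ ‖p.eval z / q.eval z‖ + 1 := by
        calc ‖p.eval z / q.eval z - signEF E z‖
            ≤ ‖p.eval z / q.eval z‖ + ‖signEF E z‖ := norm_sub_le _ _
          _ = ‖p.eval z / q.eval z‖ + 1 := by rw [norm_signEF]
      have h2 : ‖p.eval z / q.eval z‖ ≤ ‖p.eval zp‖ / ‖q.eval zq‖ := by
        rw [norm_div]
        exact div_le_div₀ (norm_nonneg _) (hzp hz) hzqpos (hzq hz)
      exact le_trans h1 (add_le_add_left h2 1)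
    set T := sSup (g '' (E ∪ F)) with hT
    have hTz : ∀ z ∈ E ∪ F, g z ≤ T := fun z hz => le_csSup hbdd ⟨z, hz, rfl⟩
    have hT0 : 0 ≤ T := le_trans (norm_nonneg _) (hTz _ hKne.choose_spec)
    -- key pointwise bounds
    have hEbound : ∀ z ∈ E, ‖(p + q).eval z‖ ≤ T * ‖q.eval z‖ := by
      intro z hz
      have hqz : q.eval z ≠ 0 := hq0 z (Or.inl hz)
      have heq : (p + q).eval z = (p.eval z / q.eval z - signEF E z) * q.eval z := by
        rw [eval_add]
        unfold signEF
        rw [if_pos hz]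
        field_simp
        ring
      rw [heq, norm_mul]
      exact mul_le_mul_of_nonneg_right (hTz z (Or.inl hz)) (norm_nonneg _)
    have hFbound : ∀ z ∈ F, ‖(p - q).eval z‖ ≤ T * ‖q.eval z‖ := by
      intro z hz
      have hqz : q.eval z ≠ 0 := hq0 z (Or.inr hz)
      have hzE : z ∉ E := fun h => Set.disjoint_left.mp hdisj h hz
      have heq : (p - q).eval z = (p.eval z / q.eval z - signEF E z) * q.eval z := by
        rw [eval_sub]
        unfold signEF
        rw [if_neg hzE]
        field_simp
      rw [heq, norm_mul]
      exact mul_le_mul_of_nonneg_right (hTz z (Or.inr hz)) (norm_nonneg _)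
    -- the maximum of ‖q‖ on the nodes
    have hstne : (s ∪ t).Nonempty := by
      refine Finset.nonempty_of_ne_empty fun h => ?_
      have : s = ∅ := Finset.union_eq_empty.mp h |>.1
      simp [this] at hscard
    obtain ⟨w, hw, hwmax⟩ := Finset.exists_max_image (s ∪ t) (fun x => ‖q.eval x‖) hstne
    set M : ℝ := ‖q.eval w‖ with hM
    have hwK : w ∈ E ∪ F := by
      rcases Finset.mem_union.mp hw with h | h
      · exact Or.inl (hsE h)
      · exact Or.inr (htF h)
    have hMpos : 0 < M := norm_pos_iff.mpr (hq0 w hwK)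
    have hqM : ∀ x ∈ s ∪ t, ‖q.eval x‖ ≤ M := fun x hx => hwmax x hx
    have hTM0 : 0 ≤ T * M := mul_nonneg hT0 hMpos.le
    -- bounds at the nodes
    have hdeg1 : (p + q).degree ≤ n := le_trans (degree_add_le p q) (max_le hp hq)
    have hdeg2 : (p - q).degree ≤ n := le_trans (degree_sub_le p q) (max_le hp hq)
    have hf1nodes : ∀ i ∈ s, ‖(p + q).eval i‖ ≤ T * M := fun i hi =>
      le_trans (hEbound i (hsE hi))
        (mul_le_mul_of_nonneg_left (hqM i (Finset.mem_union_left _ hi)) hT0)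
    have hf2nodes : ∀ i ∈ t, ‖(p - q).eval i‖ ≤ T * M := fun i hi =>
      le_trans (hFbound i (htF hi))
        (mul_le_mul_of_nonneg_left (hqM i (Finset.mem_union_right _ hi)) hT0)
    -- interpolation bounds
    have hf1all : ∀ z, ‖(p + q).eval z‖ ≤ Λs z * (T * M) := fun z =>
      interp_norm_le n s hscard _ hdeg1 z _ hf1nodes
    have hf2all : ∀ z, ‖(p - q).eval z‖ ≤ Λt z * (T * M) := fun z =>
      interp_norm_le n t htcard _ hdeg2 z _ hf2nodes
    -- combine at w
    have htwoM : (2 : ℝ) * M = ‖(p + q).eval w - (p - q).eval w‖ := by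
      have : (p + q).eval w - (p - q).eval w = 2 * q.eval w := by
        simp [eval_add, eval_sub]; ring
      rw [this, norm_mul, hM]
      norm_num
    have h2le : (2 : ℝ) * M ≤ (C + 1) * (T * M) := by
      rcases Finset.mem_union.mp hw with hws | hwt
      · have b1 : ‖(p + q).eval w‖ ≤ T * M := hf1nodes w hws
        have b2 : ‖(p - q).eval w‖ ≤ C * (T * M) :=
          le_trans (hf2all w) (mul_le_mul_of_nonneg_right (hΛtC w hws) hTM0)
        calc (2 : ℝ) * M = ‖(p + q).eval w - (p - q).eval w‖ := htwoM
          _ ≤ ‖(p + q).eval w‖ + ‖(p - q).eval w‖ := norm_sub_le _ _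
          _ ≤ T * M + C * (T * M) := add_le_add b1 b2
          _ = (C + 1) * (T * M) := by ring
      · have b1 : ‖(p + q).eval w‖ ≤ C * (T * M) :=
          le_trans (hf1all w) (mul_le_mul_of_nonneg_right (hΛsC w hwt) hTM0)
        have b2 : ‖(p - q).eval w‖ ≤ T * M := hf2nodes w hwt
        calc (2 : ℝ) * M = ‖(p + q).eval w - (p - q).eval w‖ := htwoM
          _ ≤ ‖(p + q).eval w‖ + ‖(p - q).eval w‖ := norm_sub_le _ _
          _ ≤ C * (T * M) + T * M := add_le_add b1 b2
          _ = (C + 1) * (T * M) := by ring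
    have hCpos : (0 : ℝ) < C + 1 := by linarith
    rw [div_le_iff₀ hCpos]
    have h2T : (2 : ℝ) ≤ (C + 1) * T := by
      have := (mul_le_mul_iff_of_pos_right hMpos).mp (by linarith [h2le] : 2 * M ≤ ((C + 1) * T) * M)
      linarith
    linarith
  have hlb : 0 < 2 / (C + 1) := div_pos two_pos (by linarith)
  constructor
  · exact lt_of_lt_of_le hlb (le_csInf ⟨1, h1⟩ key)
  · exact csInf_le ⟨2 / (C + 1), key⟩ h1
end

section
/- Let E be the closed disk of radius 1/2 centered at −1 and F the closed disk of radius 1/2 centered at +1 in ℂ. For every n ≥ 1, the minimal value of Problem Z3 is σ_n(E,F) = ((2 − √3)/(2 + √3))^n, and it is attained by (a scalar multiple of) r(z) = ((z + √3/2)/(z − √3/2))^n. -/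
open Polynomial Set

namespace ZoloAux


lemma s3_sq : Real.sqrt 3 ^ 2 = 3 := Real.sq_sqrt (by norm_num)
lemma s3_pos : 0 < Real.sqrt 3 := Real.sqrt_pos.mpr (by norm_num)
lemma s3_lt_two : Real.sqrt 3 < 2 := by nlinarith [s3_sq, s3_pos]
lemma one_lt_s3 : 1 < Real.sqrt 3 := by nlinarith [s3_sq, s3_pos]
lemma rho_pos : 0 < 2 - Real.sqrt 3 := by linarith [s3_lt_two]
lemma rho_lt_one : 2 - Real.sqrt 3 < 1 := by linarith [one_lt_s3]
lemma sig_pos : 0 < 2 + Real.sqrt 3 := by linarith [s3_pos]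
lemma rho_mul : (2 - Real.sqrt 3) * (2 + Real.sqrt 3) = 1 := by nlinarith [s3_sq]
lemma one_lt_sig : 1 < 2 + Real.sqrt 3 := by linarith [s3_pos]
lemma inv_sig : (2 + Real.sqrt 3)⁻¹ = 2 - Real.sqrt 3 :=
  inv_eq_of_mul_eq_one_left rho_mul
lemma inv_rho : (2 - Real.sqrt 3)⁻¹ = 2 + Real.sqrt 3 :=
  inv_eq_of_mul_eq_one_right rho_mul

/-- the pole/zero location -/
noncomputable abbrev ac : ℂ := ((Real.sqrt 3 / 2 : ℝ) : ℂ)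

lemma norm_le_mul_of_sq {u v : ℂ} {c : ℝ} (hc : 0 ≤ c)
    (h : Complex.normSq u ≤ c ^ 2 * Complex.normSq v) : ‖u‖ ≤ c * ‖v‖ := by
  have h1 : ‖u‖ = Real.sqrt (Complex.normSq u) := by
    rw [Complex.norm_def]
  have h2 : ‖v‖ = Real.sqrt (Complex.normSq v) := by
    rw [Complex.norm_def]
  rw [h1, h2]
  calc Real.sqrt (Complex.normSq u) ≤ Real.sqrt (c ^ 2 * Complex.normSq v) :=
        Real.sqrt_le_sqrt h
    _ = c * Real.sqrt (Complex.normSq v) := by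
        rw [Real.sqrt_mul (sq_nonneg c), Real.sqrt_sq hc]

lemma sq_of_norm_le {u : ℂ} {c : ℝ} (h : ‖u‖ ≤ c) : Complex.normSq u ≤ c ^ 2 := by
  have := Complex.sq_norm u
  have h2 : ‖u‖ ^ 2 ≤ c ^ 2 :=
    pow_le_pow_left₀ (norm_nonneg _) h 2
  linarith

lemma normSq_of_norm_eq {u : ℂ} {c : ℝ} (h : ‖u‖ = c) : Complex.normSq u = c ^ 2 := by
  rw [← Complex.sq_norm, h]

lemma s3_half_lemma : (0:ℝ) ≤ 4 * Real.sqrt 3 - 6 := by nlinarith [s3_sq, s3_pos]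

/-- on E : `|z + a| ≤ (2-√3)|z - a|` -/
lemma hE1 {z : ℂ} (hz : z ∈ Metric.closedBall (-1 : ℂ) (1 / 2)) :
    ‖z + ac‖ ≤ (2 - Real.sqrt 3) * ‖z - ac‖ := by
  rw [Metric.mem_closedBall, dist_eq_norm, show z - (-1) = z + 1 by ring] at hz
  have h2 := sq_of_norm_le hz
  apply norm_le_mul_of_sq rho_pos.le
  simp only [Complex.normSq_apply, Complex.add_re, Complex.add_im, Complex.sub_re,
    Complex.sub_im, Complex.ofReal_re, Complex.ofReal_im, Complex.one_re, Complex.one_im] at h2 ⊢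
  set x := z.re; set y := z.im; set s := Real.sqrt 3 with hs
  have h3 := s3_half_lemma; rw [← hs] at h3
  have hsq : s ^ 2 = 3 := s3_sq
  have key : (2 - s) ^ 2 * ((x - s/2) * (x - s/2) + (y - 0) * (y - 0))
      - ((x + s/2) * (x + s/2) + (y + 0) * (y + 0))
      = (4*s - 6) * (1/4 - ((x+1) * (x+1) + (y+0) * (y+0))) := by
    linear_combination (s^2/4 - s*(x+1) + x^2 + y^2 + 4*x + 3/2) * hsq
  nlinarith [mul_nonneg h3 (by nlinarith : (0:ℝ) ≤ 1/4 - ((x+1)*(x+1) + (y+0)*(y+0)))]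

/-- on F : `|z - a| ≤ (2-√3)|z + a|` -/
lemma hF1 {z : ℂ} (hz : z ∈ Metric.closedBall (1 : ℂ) (1 / 2)) :
    ‖z - ac‖ ≤ (2 - Real.sqrt 3) * ‖z + ac‖ := by
  rw [Metric.mem_closedBall, dist_eq_norm] at hz
  have h2 := sq_of_norm_le hz
  apply norm_le_mul_of_sq rho_pos.le
  simp only [Complex.normSq_apply, Complex.add_re, Complex.add_im, Complex.sub_re,
    Complex.sub_im, Complex.ofReal_re, Complex.ofReal_im, Complex.one_re, Complex.one_im] at h2 ⊢
  set x := z.re; set y := z.im; set s := Real.sqrt 3 with hs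
  have h3 := s3_half_lemma; rw [← hs] at h3
  have hsq : s ^ 2 = 3 := s3_sq
  have key : (2 - s) ^ 2 * ((x + s/2) * (x + s/2) + (y + 0) * (y + 0))
      - ((x - s/2) * (x - s/2) + (y - 0) * (y - 0))
      = (4*s - 6) * (1/4 - ((x-1) * (x-1) + (y-0) * (y-0))) := by
    linear_combination (s^2/4 + s*(x-1) + x^2 + y^2 - 4*x + 3/2) * hsq
  nlinarith [mul_nonneg h3 (by nlinarith : (0:ℝ) ≤ 1/4 - ((x-1)*(x-1) + (y-0)*(y-0)))]

lemma ne_one_of_norm_rho {w : ℂ} (hw : ‖w‖ = 2 - Real.sqrt 3) : w ≠ 1 := by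
  intro h; rw [h, norm_one] at hw; linarith [rho_lt_one]
lemma ne_one_of_norm_sig {w : ℂ} (hw : ‖w‖ = 2 + Real.sqrt 3) : w ≠ 1 := by
  intro h; rw [h, norm_one] at hw; linarith [one_lt_sig]

/-- the Möbius image of the inner circle lies in `E` -/
lemma gE {w : ℂ} (hw : ‖w‖ = 2 - Real.sqrt 3) :
    ac * (w + 1) / (w - 1) ∈ Metric.closedBall (-1 : ℂ) (1 / 2) := by
  have hw1 : w ≠ 1 := ne_one_of_norm_rho hw
  have hw1' : w - 1 ≠ 0 := sub_ne_zero.mpr hw1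
  rw [Metric.mem_closedBall, dist_eq_norm,
    show ac * (w + 1) / (w - 1) - (-1) = ((ac + 1) * w + (ac - 1)) / (w - 1) by
      field_simp; ring, norm_div, div_le_iff₀ (norm_pos_iff.mpr hw1')]
  apply norm_le_mul_of_sq (by norm_num)
  have hN := normSq_of_norm_eq hw
  have hsq := s3_sq
  simp only [Complex.normSq_apply, Complex.add_re, Complex.add_im, Complex.sub_re,
    Complex.sub_im, Complex.mul_re, Complex.mul_im, Complex.ofReal_re, Complex.ofReal_im,
    Complex.one_re, Complex.one_im] at hN ⊢
  set x := w.re; set y := w.im; set s := Real.sqrt 3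
  apply le_of_eq
  linear_combination (x/2 + (s^2-5)/4) * hsq + (s^2/4 + s + 3/4) * hN

/-- the Möbius image of the outer circle lies in `F` -/
lemma gF {w : ℂ} (hw : ‖w‖ = 2 + Real.sqrt 3) :
    ac * (w + 1) / (w - 1) ∈ Metric.closedBall (1 : ℂ) (1 / 2) := by
  have hw1 : w ≠ 1 := ne_one_of_norm_sig hw
  have hw1' : w - 1 ≠ 0 := sub_ne_zero.mpr hw1
  rw [Metric.mem_closedBall, dist_eq_norm,
    show ac * (w + 1) / (w - 1) - 1 = ((ac - 1) * w + (ac + 1)) / (w - 1) by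
      field_simp; ring, norm_div, div_le_iff₀ (norm_pos_iff.mpr hw1')]
  apply norm_le_mul_of_sq (by norm_num)
  have hN := normSq_of_norm_eq hw
  have hsq := s3_sq
  simp only [Complex.normSq_apply, Complex.add_re, Complex.add_im, Complex.sub_re,
    Complex.sub_im, Complex.mul_re, Complex.mul_im, Complex.ofReal_re, Complex.ofReal_im,
    Complex.one_re, Complex.one_im] at hN ⊢
  set x := w.re; set y := w.im; set s := Real.sqrt 3
  apply le_of_eq
  linear_combination (x/2 + (s^2-5)/4) * hsq + (s^2/4 - s + 3/4) * hN



/-- transplant of a polynomial under the Möbius map `w ↦ a(w+1)/(w-1)` -/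
noncomputable def tpoly (n : ℕ) (r : ℂ[X]) : ℂ[X] :=
  ∑ k ∈ Finset.range (n + 1), C (r.coeff k) * (C ac * (X + 1)) ^ k * (X - 1) ^ (n - k)

/-- reversal at degree `N` -/
noncomputable def rev (N : ℕ) (r : ℂ[X]) : ℂ[X] :=
  ∑ k ∈ Finset.range (N + 1), C (r.coeff k) * X ^ (N - k)

lemma tpoly_natDegree (n : ℕ) (r : ℂ[X]) : (tpoly n r).natDegree ≤ n := by
  apply natDegree_sum_le_of_forall_le
  intro k hk
  have hk' : k ≤ n := Nat.lt_succ_iff.mp (Finset.mem_range.mp hk)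
  calc (C (r.coeff k) * (C ac * (X + 1)) ^ k * (X - 1) ^ (n - k)).natDegree
      ≤ (C (r.coeff k) * (C ac * (X + 1)) ^ k).natDegree + ((X - 1 : ℂ[X]) ^ (n - k)).natDegree :=
        natDegree_mul_le
    _ ≤ ((C ac * (X + 1) : ℂ[X]) ^ k).natDegree + ((X - 1 : ℂ[X]) ^ (n - k)).natDegree := by
        gcongr; exact natDegree_C_mul_le _ _
    _ ≤ k * (C ac * (X + 1) : ℂ[X]).natDegree + (n - k) * (X - 1 : ℂ[X]).natDegree := by
        gcongr <;> exact natDegree_pow_le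
    _ ≤ k * 1 + (n - k) * 1 := by
        gcongr
        · calc (C ac * (X + 1) : ℂ[X]).natDegree ≤ (X + 1 : ℂ[X]).natDegree :=
              natDegree_C_mul_le _ _
            _ ≤ 1 := by
              rw [show (X + 1 : ℂ[X]) = X + C 1 by simp, natDegree_X_add_C]
        · rw [show (X - 1 : ℂ[X]) = X - C 1 by simp, natDegree_X_sub_C]
    _ ≤ n := by omega

lemma rev_natDegree (N : ℕ) (r : ℂ[X]) : (rev N r).natDegree ≤ N := by
  apply natDegree_sum_le_of_forall_le
  intro k hk
  calc (C (r.coeff k) * X ^ (N - k)).natDegree ≤ ((X : ℂ[X]) ^ (N - k)).natDegree :=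
        natDegree_C_mul_le _ _
    _ ≤ (N - k) * (X : ℂ[X]).natDegree := natDegree_pow_le
    _ ≤ N := by rw [natDegree_X]; omega

lemma tpoly_eval {n : ℕ} {r : ℂ[X]} (hr : r.natDegree ≤ n) {w : ℂ} (hw : w ≠ 1) :
    (tpoly n r).eval w = (w - 1) ^ n * r.eval (ac * (w + 1) / (w - 1)) := by
  have hw1 : w - 1 ≠ 0 := sub_ne_zero.mpr hw
  rw [tpoly, eval_finset_sum,
    eval_eq_sum_range' (lt_of_le_of_lt hr (Nat.lt_succ_self n)), Finset.mul_sum]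
  apply Finset.sum_congr rfl
  intro k hk
  have hk' : k ≤ n := Nat.lt_succ_iff.mp (Finset.mem_range.mp hk)
  simp only [eval_mul, eval_pow, eval_add, eval_sub, eval_X, eval_C, eval_one]
  rw [div_pow, ← pow_sub_mul_pow (w - 1) hk']
  have hne : (w - 1) ^ k ≠ 0 := pow_ne_zero _ hw1
  field_simp

lemma rev_eval {N : ℕ} {r : ℂ[X]} (hr : r.natDegree ≤ N) {w : ℂ} (hw : w ≠ 0) :
    (rev N r).eval w = w ^ N * r.eval w⁻¹ := by
  rw [rev, eval_finset_sum,
    eval_eq_sum_range' (lt_of_le_of_lt hr (Nat.lt_succ_self N)), Finset.mul_sum]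
  apply Finset.sum_congr rfl
  intro k hk
  have hk' : k ≤ N := Nat.lt_succ_iff.mp (Finset.mem_range.mp hk)
  simp only [eval_mul, eval_pow, eval_X, eval_C]
  rw [inv_pow, ← pow_sub_mul_pow w hk']
  have hne : w ^ k ≠ 0 := pow_ne_zero _ hw
  field_simp

lemma sphere_infinite {R : ℝ} (hR : 0 < R) : (Metric.sphere (0 : ℂ) R).Infinite := by
  have hinj : Set.InjOn (fun x : ℝ => (⟨x, Real.sqrt (R ^ 2 - x ^ 2)⟩ : ℂ)) (Set.Icc 0 R) := by
    intro a _ b _ hab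
    exact congrArg Complex.re hab
  have hIcc : (Set.Icc (0:ℝ) R).Infinite := Set.infinite_coe_iff.mp (Set.Icc.infinite hR)
  apply Set.Infinite.mono _ (hIcc.image hinj)
  rintro z ⟨x, hx, rfl⟩
  rw [Metric.mem_sphere, dist_zero_right]
  have h1 : 0 ≤ R ^ 2 - x ^ 2 := by
    rcases hx with ⟨h0, h1⟩; nlinarith
  have : Complex.normSq (⟨x, Real.sqrt (R ^ 2 - x ^ 2)⟩ : ℂ) = R ^ 2 := by
    rw [Complex.normSq_mk]
    have := Real.sq_sqrt h1
    nlinarith [this]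
  rw [Complex.norm_def, this, Real.sqrt_sq hR.le]

lemma poly_maxmod (r : ℂ[X]) {R C : ℝ} (hR : 0 < R)
    (hb : ∀ w : ℂ, ‖w‖ = R → ‖r.eval w‖ ≤ C) :
    ∀ w : ℂ, ‖w‖ ≤ R → ‖r.eval w‖ ≤ C := by
  intro w hw
  have hfr : ∀ z ∈ frontier (Metric.ball (0:ℂ) R), ‖(fun u => r.eval u) z‖ ≤ C := by
    rw [frontier_ball _ hR.ne']
    intro z hz
    exact hb z (mem_sphere_zero_iff_norm.mp hz)
  have hcl : w ∈ closure (Metric.ball (0:ℂ) R) := by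
    rw [closure_ball _ hR.ne']
    exact Metric.mem_closedBall.mpr (by rwa [dist_zero_right])
  exact Complex.norm_le_of_forall_mem_frontier_norm_le Metric.isBounded_ball
    ((r.differentiable).diffContOnCl) hfr hcl

lemma poly_growth {N : ℕ} {r : ℂ[X]} (hr : r.natDegree ≤ N) {K : ℝ} (hK : 0 ≤ K)
    (hb : ∀ w : ℂ, ‖w‖ = 2 - Real.sqrt 3 → ‖r.eval w‖ ≤ K) :
    ∀ v : ℂ, ‖v‖ = 2 + Real.sqrt 3 → ‖r.eval v‖ ≤ (2 + Real.sqrt 3) ^ (2 * N) * K := by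
  have rho_mul : (2 - Real.sqrt 3) * (2 + Real.sqrt 3) = 1 := by
    nlinarith [Real.sq_sqrt (show (0:ℝ) ≤ 3 by norm_num)]
  have rho_pos : 0 < 2 - Real.sqrt 3 := by
    nlinarith [Real.sq_sqrt (show (0:ℝ) ≤ 3 by norm_num), Real.sqrt_nonneg 3]
  have sig_pos : (0:ℝ) < 2 + Real.sqrt 3 := by positivity
  have hD : ∀ w : ℂ, ‖w‖ = 2 + Real.sqrt 3 → ‖(rev N r).eval w‖ ≤ (2 + Real.sqrt 3) ^ N * K := by
    intro w hw
    have hw0 : w ≠ 0 := by intro h; rw [h, norm_zero] at hw; linarith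
    rw [rev_eval hr hw0, norm_mul, norm_pow, hw]
    have hiw : ‖w⁻¹‖ = 2 - Real.sqrt 3 := by
      rw [norm_inv, hw, inv_eq_of_mul_eq_one_left rho_mul]
    exact mul_le_mul_of_nonneg_left (hb _ hiw) (pow_nonneg sig_pos.le N)
  intro v hv
  have hv0 : v ≠ 0 := by intro h; rw [h, norm_zero] at hv; linarith
  have hiv : ‖v⁻¹‖ = 2 - Real.sqrt 3 := by
    rw [norm_inv, hv, inv_eq_of_mul_eq_one_left rho_mul]
  have hivle : ‖v⁻¹‖ ≤ 2 + Real.sqrt 3 := by rw [hiv]; linarith [Real.sqrt_nonneg 3]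
  have hDv := poly_maxmod (rev N r) sig_pos hD v⁻¹ hivle
  have hrepr : (rev N r).eval v⁻¹ = (v⁻¹) ^ N * r.eval v := by
    rw [rev_eval hr (inv_ne_zero hv0), inv_inv]
  have heq : ‖r.eval v‖ = ‖v‖ ^ N * ‖(rev N r).eval v⁻¹‖ := by
    rw [hrepr, norm_mul, norm_pow, norm_inv]
    have hne : ‖v‖ ≠ 0 := norm_ne_zero_iff.mpr hv0
    rw [inv_pow, ← mul_assoc, mul_inv_cancel₀ (pow_ne_zero N hne), one_mul]
  rw [heq, hv]
  calc (2 + Real.sqrt 3) ^ N * ‖(rev N r).eval v⁻¹‖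
      ≤ (2 + Real.sqrt 3) ^ N * ((2 + Real.sqrt 3) ^ N * K) :=
        mul_le_mul_of_nonneg_left hDv (pow_nonneg sig_pos.le N)
    _ = (2 + Real.sqrt 3) ^ (2 * N) * K := by rw [two_mul, pow_add]; ring


lemma lower_bound (n : ℕ) (p q : ℂ[X]) (hp : p.natDegree ≤ n) (hq : q.natDegree ≤ n)
    (hqE : ∀ z ∈ Metric.closedBall (-1:ℂ) (1/2), q.eval z ≠ 0)
    (hpqF : ∀ z ∈ Metric.closedBall (1:ℂ) (1/2), ‖q.eval z‖ ≤ ‖p.eval z‖) :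
    (2 - Real.sqrt 3) ^ (2*n) ≤
      sSup ((fun z => ‖p.eval z / q.eval z‖) '' Metric.closedBall (-1:ℂ) (1/2)) := by
  by_contra hcon
  push_neg at hcon
  set τ := (2 - Real.sqrt 3) ^ (2*n) with hτ
  have hτpos : 0 < τ := pow_pos rho_pos _
  have hcont : ContinuousOn (fun z => ‖p.eval z / q.eval z‖)
      (Metric.closedBall (-1:ℂ) (1/2)) := by
    apply ContinuousOn.norm
    exact ContinuousOn.div (p.continuous).continuousOn (q.continuous).continuousOn hqE
  have hbdd : BddAbove ((fun z => ‖p.eval z / q.eval z‖) '' Metric.closedBall (-1:ℂ) (1/2)) :=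
    (isCompact_closedBall _ _).bddAbove_image hcont
  have hpt : ∀ z ∈ Metric.closedBall (-1:ℂ) (1/2), ‖p.eval z‖ < τ * ‖q.eval z‖ := by
    intro z hz
    have h1 : ‖p.eval z / q.eval z‖ ≤ _ := le_csSup hbdd ⟨z, hz, rfl⟩
    have h2 : ‖p.eval z / q.eval z‖ < τ := h1.trans_lt hcon
    rw [norm_div, div_lt_iff₀ (norm_pos_iff.mpr (hqE z hz))] at h2
    linarith [h2]
  set P := tpoly n p with hP
  set Q := tpoly n q with hQ
  set P' := rev n P with hP'
  set Q' := rev n Q with hQ'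
  have F1a : ∀ w : ℂ, ‖w‖ = 2 - Real.sqrt 3 → ‖P.eval w‖ < τ * ‖Q.eval w‖ := by
    intro w hw
    have hw1 := ne_one_of_norm_rho hw
    rw [hP, hQ, tpoly_eval hp hw1, tpoly_eval hq hw1, norm_mul, norm_mul]
    have h := hpt _ (gE hw)
    have hwpos : 0 < ‖(w-1)^n‖ :=
      norm_pos_iff.mpr (pow_ne_zero _ (sub_ne_zero.mpr hw1))
    calc ‖(w-1)^n‖ * ‖p.eval (ac * (w+1)/(w-1))‖
        < ‖(w-1)^n‖ * (τ * ‖q.eval (ac * (w+1)/(w-1))‖) := by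
          exact mul_lt_mul_of_pos_left h hwpos
      _ = τ * (‖(w-1)^n‖ * ‖q.eval (ac * (w+1)/(w-1))‖) := by ring
  have F1b : ∀ w : ℂ, ‖w‖ = 2 - Real.sqrt 3 → Q.eval w ≠ 0 := by
    intro w hw
    have hw1 := ne_one_of_norm_rho hw
    rw [hQ, tpoly_eval hq hw1]
    exact mul_ne_zero (pow_ne_zero _ (sub_ne_zero.mpr hw1)) (hqE _ (gE hw))
  have F2 : ∀ w : ℂ, ‖w‖ = 2 + Real.sqrt 3 → ‖Q.eval w‖ ≤ ‖P.eval w‖ := by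
    intro w hw
    have hw1 := ne_one_of_norm_sig hw
    rw [hP, hQ, tpoly_eval hp hw1, tpoly_eval hq hw1, norm_mul, norm_mul]
    exact mul_le_mul_of_nonneg_left (hpqF _ (gF hw)) (norm_nonneg _)
  have hrhone : (0:ℝ) < 2 - Real.sqrt 3 := rho_pos
  have F3 : ∀ w : ℂ, ‖w‖ = 2 - Real.sqrt 3 → ‖Q'.eval w‖ ≤ ‖P'.eval w‖ := by
    intro w hw
    have hw0 : w ≠ 0 := by intro h; rw [h, norm_zero] at hw; linarith
    have hiw : ‖w⁻¹‖ = 2 + Real.sqrt 3 := by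
      rw [norm_inv, hw, inv_rho]
    rw [hP', hQ', rev_eval (tpoly_natDegree n q) hw0, rev_eval (tpoly_natDegree n p) hw0,
      norm_mul, norm_mul]
    exact mul_le_mul_of_nonneg_left (F2 _ hiw) (norm_nonneg _)
  have F4 : ∀ w : ℂ, ‖w‖ = 2 + Real.sqrt 3 → ‖P'.eval w‖ ≤ τ * ‖Q'.eval w‖ := by
    intro w hw
    have hw0 : w ≠ 0 := by intro h; rw [h, norm_zero] at hw; linarith [sig_pos]
    have hiw : ‖w⁻¹‖ = 2 - Real.sqrt 3 := by
      rw [norm_inv, hw, inv_sig]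
    rw [hP', hQ', rev_eval (tpoly_natDegree n q) hw0, rev_eval (tpoly_natDegree n p) hw0,
      norm_mul, norm_mul]
    calc ‖w^n‖ * ‖P.eval w⁻¹‖ ≤ ‖w^n‖ * (τ * ‖Q.eval w⁻¹‖) :=
          mul_le_mul_of_nonneg_left (le_of_lt (F1a _ hiw)) (norm_nonneg _)
      _ = τ * (‖w^n‖ * ‖Q.eval w⁻¹‖) := by ring
  -- maximizers
  have hsne1 : (Metric.sphere (0:ℂ) (2 - Real.sqrt 3)).Nonempty :=
    NormedSpace.sphere_nonempty.mpr rho_pos.le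
  have hsne2 : (Metric.sphere (0:ℂ) (2 + Real.sqrt 3)).Nonempty :=
    NormedSpace.sphere_nonempty.mpr sig_pos.le
  set A := P * Q' with hA
  set B := Q * P' with hB
  obtain ⟨w₁, hw₁m, hw₁⟩ := (isCompact_sphere (0:ℂ) (2 - Real.sqrt 3)).exists_isMaxOn hsne1
    ((B.continuous).norm.continuousOn : ContinuousOn (fun w => ‖B.eval w‖) _)
  obtain ⟨w₂, hw₂m, hw₂⟩ := (isCompact_sphere (0:ℂ) (2 + Real.sqrt 3)).exists_isMaxOn hsne2
    ((B.continuous).norm.continuousOn : ContinuousOn (fun w => ‖B.eval w‖) _)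
  obtain ⟨w₃, hw₃m, hw₃⟩ := (isCompact_sphere (0:ℂ) (2 - Real.sqrt 3)).exists_isMaxOn hsne1
    ((A.continuous).norm.continuousOn : ContinuousOn (fun w => ‖A.eval w‖) _)
  have hw₁n : ‖w₁‖ = 2 - Real.sqrt 3 := mem_sphere_zero_iff_norm.mp hw₁m
  have hw₂n : ‖w₂‖ = 2 + Real.sqrt 3 := mem_sphere_zero_iff_norm.mp hw₂m
  have hw₃n : ‖w₃‖ = 2 - Real.sqrt 3 := mem_sphere_zero_iff_norm.mp hw₃m
  set mB := ‖B.eval w₁‖ with hmBdef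
  -- B is a nonzero polynomial
  have hQne : Q ≠ 0 := by
    obtain ⟨w₀, hw₀⟩ := hsne1
    intro h
    exact F1b w₀ (mem_sphere_zero_iff_norm.mp hw₀) (by rw [h, eval_zero])
  have hP'ne : P' ≠ 0 := by
    intro h0
    have hProots : ∀ v : ℂ, ‖v‖ = 2 + Real.sqrt 3 → P.eval v = 0 := by
      intro v hv
      have hv0 : v ≠ 0 := by intro h; rw [h, norm_zero] at hv; linarith [sig_pos]
      have hide := rev_eval (tpoly_natDegree n p) (inv_ne_zero hv0)
      rw [inv_inv, ← hP'] at hide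
      rw [h0, eval_zero] at hide
      rcases mul_eq_zero.mp hide.symm with h | h
      · exact absurd h (pow_ne_zero _ (inv_ne_zero hv0))
      · exact h
    have hQroots : ∀ v : ℂ, ‖v‖ = 2 + Real.sqrt 3 → Q.eval v = 0 := by
      intro v hv
      have := F2 v hv
      rw [hProots v hv, norm_zero] at this
      exact norm_le_zero_iff.mp this
    have : Q = 0 := by
      apply Polynomial.eq_zero_of_infinite_isRoot
      apply Set.Infinite.mono _ (sphere_infinite sig_pos)
      intro v hv
      exact hQroots v (mem_sphere_zero_iff_norm.mp hv)
    exact hQne this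
  have hBne : B ≠ 0 := mul_ne_zero hQne hP'ne
  have hmB : 0 < mB := by
    rcases (norm_nonneg (B.eval w₁)).lt_or_eq with h | h
    · exact h
    · exfalso
      apply hBne
      apply Polynomial.eq_zero_of_infinite_isRoot
      apply Set.Infinite.mono _ (sphere_infinite rho_pos)
      intro v hv
      have h2 : ‖B.eval v‖ ≤ ‖B.eval w₁‖ := hw₁ hv
      rw [← h] at h2
      show B.IsRoot v
      exact norm_le_zero_iff.mp h2
  set KA := ‖A.eval w₃‖ with hKAdef
  have hKAlt : KA < τ * mB := by
    rw [hKAdef, hA, eval_mul, norm_mul]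
    rcases eq_or_ne (Q'.eval w₃) 0 with h | h
    · rw [h, norm_zero, mul_zero]; positivity
    · have h1 := F1a w₃ hw₃n
      have h2 := F3 w₃ hw₃n
      have h3 : ‖Q.eval w₃‖ * ‖P'.eval w₃‖ ≤ mB := by
        have h4 : ‖B.eval w₃‖ ≤ ‖B.eval w₁‖ := hw₁ hw₃m
        calc ‖Q.eval w₃‖ * ‖P'.eval w₃‖ = ‖B.eval w₃‖ := by
              rw [hB, eval_mul, norm_mul]
          _ ≤ mB := h4
      calc ‖P.eval w₃‖ * ‖Q'.eval w₃‖
          < (τ * ‖Q.eval w₃‖) * ‖Q'.eval w₃‖ :=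
            mul_lt_mul_of_pos_right h1 (norm_pos_iff.mpr h)
        _ ≤ (τ * ‖Q.eval w₃‖) * ‖P'.eval w₃‖ := by
            apply mul_le_mul_of_nonneg_left h2
            positivity
        _ = τ * (‖Q.eval w₃‖ * ‖P'.eval w₃‖) := by ring
        _ ≤ τ * mB := mul_le_mul_of_nonneg_left h3 hτpos.le
  have hApt : ∀ w : ℂ, ‖w‖ = 2 - Real.sqrt 3 → ‖A.eval w‖ ≤ KA := by
    intro w hw
    exact hw₃ (mem_sphere_zero_iff_norm.mpr hw)
  have hAnat : A.natDegree ≤ 2 * n := by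
    rw [hA]
    calc (P * Q').natDegree ≤ P.natDegree + Q'.natDegree := natDegree_mul_le
      _ ≤ n + n := add_le_add (tpoly_natDegree n p) (rev_natDegree n Q)
      _ = 2 * n := by ring
  have hgrow := poly_growth hAnat (norm_nonneg _) hApt
  have hBA : ∀ w : ℂ, ‖w‖ = 2 + Real.sqrt 3 → ‖B.eval w‖ ≤ τ * ‖A.eval w‖ := by
    intro w hw
    rw [hA, hB, eval_mul, eval_mul, norm_mul, norm_mul]
    calc ‖Q.eval w‖ * ‖P'.eval w‖ ≤ ‖P.eval w‖ * (τ * ‖Q'.eval w‖) :=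
          mul_le_mul (F2 w hw) (F4 w hw) (norm_nonneg _) (norm_nonneg _)
      _ = τ * (‖P.eval w‖ * ‖Q'.eval w‖) := by ring
  have hmax : mB ≤ ‖B.eval w₂‖ := by
    have := poly_maxmod B sig_pos
      (fun w hw => hw₂ (mem_sphere_zero_iff_norm.mpr hw)) w₁
      (by rw [hw₁n]; linarith [s3_pos])
    exact this
  have hchain : mB < mB := by
    calc mB ≤ ‖B.eval w₂‖ := hmax
      _ ≤ τ * ‖A.eval w₂‖ := hBA w₂ hw₂n
      _ ≤ τ * ((2 + Real.sqrt 3) ^ (2*(2*n)) * KA) :=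
          mul_le_mul_of_nonneg_left (hgrow w₂ hw₂n) hτpos.le
      _ < τ * ((2 + Real.sqrt 3) ^ (2*(2*n)) * (τ * mB)) := by
          apply mul_lt_mul_of_pos_left _ hτpos
          exact mul_lt_mul_of_pos_left hKAlt (by positivity)
      _ = ((2 - Real.sqrt 3) * (2 + Real.sqrt 3)) ^ (2*(2*n)) * mB := by
          rw [hτ, mul_pow]
          ring
      _ = mB := by rw [rho_mul, one_pow, one_mul]
  exact absurd hchain (lt_irrefl _)

noncomputable def p0 (n : ℕ) : ℂ[X] := C (((2 - Real.sqrt 3) ^ n : ℝ) : ℂ) * (X + C ac) ^ n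
noncomputable def q0 (n : ℕ) : ℂ[X] := (X - C ac) ^ n

lemma p0_eval (n : ℕ) (z : ℂ) :
    (p0 n).eval z = (((2 - Real.sqrt 3) ^ n : ℝ) : ℂ) * (z + ac) ^ n := by
  simp [p0]

lemma q0_eval (n : ℕ) (z : ℂ) : (q0 n).eval z = (z - ac) ^ n := by
  simp [q0]

lemma p0_deg (n : ℕ) : (p0 n).degree ≤ n := by
  apply (natDegree_le_iff_degree_le).mp
  calc (p0 n).natDegree ≤ ((X + C ac : ℂ[X]) ^ n).natDegree := natDegree_C_mul_le _ _
    _ ≤ n * (X + C ac : ℂ[X]).natDegree := natDegree_pow_le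
    _ = n := by rw [natDegree_X_add_C, mul_one]

lemma q0_deg (n : ℕ) : (q0 n).degree ≤ n := by
  apply (natDegree_le_iff_degree_le).mp
  calc (q0 n).natDegree ≤ n * (X - C ac : ℂ[X]).natDegree := natDegree_pow_le
    _ = n := by rw [natDegree_X_sub_C, mul_one]

lemma ac_notin_E : (ac : ℂ) ∉ Metric.closedBall (-1 : ℂ) (1 / 2) := by
  intro h
  rw [Metric.mem_closedBall, dist_eq_norm, show (ac : ℂ) - (-1) = ((Real.sqrt 3 / 2 + 1 : ℝ) : ℂ) by
    push_cast; ring] at h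
  rw [Complex.norm_real, Real.norm_eq_abs, abs_of_nonneg (by positivity : (0:ℝ) ≤ Real.sqrt 3 / 2 + 1)] at h
  linarith [s3_pos]

lemma q0_ne_on_E (n : ℕ) : ∀ z ∈ Metric.closedBall (-1 : ℂ) (1 / 2), (q0 n).eval z ≠ 0 := by
  intro z hz
  rw [q0_eval]
  apply pow_ne_zero
  apply sub_ne_zero.mpr
  intro h
  exact ac_notin_E (h ▸ hz)

lemma norm_c0 (n : ℕ) : ‖(((2 - Real.sqrt 3) ^ n : ℝ) : ℂ)‖ = (2 - Real.sqrt 3) ^ n := by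
  rw [Complex.norm_real, Real.norm_eq_abs, abs_of_nonneg (pow_nonneg rho_pos.le n)]

lemma pq0_F (n : ℕ) : ∀ z ∈ Metric.closedBall (1 : ℂ) (1 / 2),
    ‖(q0 n).eval z‖ ≤ ‖(p0 n).eval z‖ := by
  intro z hz
  rw [p0_eval, q0_eval, norm_mul, norm_pow, norm_pow, norm_c0, ← mul_pow]
  exact pow_le_pow_left₀ (norm_nonneg _) (hF1 hz) n

lemma key_div : (2 - Real.sqrt 3) / (2 + Real.sqrt 3) = (2 - Real.sqrt 3) * (2 - Real.sqrt 3) := by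
  rw [div_eq_iff (ne_of_gt sig_pos)]
  nlinarith [s3_sq]

lemma sup_val (n : ℕ) :
    sSup ((fun z => ‖(p0 n).eval z / (q0 n).eval z‖) '' Metric.closedBall (-1 : ℂ) (1 / 2)) =
      ((2 - Real.sqrt 3) / (2 + Real.sqrt 3)) ^ n := by
  apply IsGreatest.csSup_eq
  constructor
  · -- attained at z₀ = -1/2
    refine ⟨(-1/2 : ℂ), ?_, ?_⟩
    · rw [Metric.mem_closedBall, dist_eq_norm,
        show (-1/2 : ℂ) - (-1) = ((1/2 : ℝ) : ℂ) by push_cast; ring,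
        Complex.norm_real, Real.norm_eq_abs, abs_of_nonneg (by norm_num : (0:ℝ) ≤ 1/2)]
    · show ‖(p0 n).eval (-1/2) / (q0 n).eval (-1/2)‖ = _
      rw [p0_eval, q0_eval,
        show (-1/2 : ℂ) + ac = ((Real.sqrt 3 / 2 - 1/2 : ℝ) : ℂ) by push_cast; ring,
        show (-1/2 : ℂ) - ac = ((-(1/2 + Real.sqrt 3 / 2) : ℝ) : ℂ) by push_cast; ring]
      rw [norm_div, norm_mul, norm_pow, norm_pow, norm_c0, Complex.norm_real,
        Complex.norm_real, Real.norm_eq_abs, Real.norm_eq_abs,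
        abs_of_nonneg (by linarith [one_lt_s3] : (0:ℝ) ≤ Real.sqrt 3 / 2 - 1/2),
        abs_neg, abs_of_nonneg (by positivity : (0:ℝ) ≤ 1/2 + Real.sqrt 3 / 2)]
      rw [← mul_pow, ← div_pow]
      congr 1
      rw [div_eq_div_iff (by positivity : (1:ℝ)/2 + Real.sqrt 3/2 ≠ 0) (ne_of_gt sig_pos)]
      linear_combination ((2 - Real.sqrt 3)/2) * s3_sq
  · rintro y ⟨z, hz, rfl⟩
    show ‖(p0 n).eval z / (q0 n).eval z‖ ≤ _
    have hq0 : (q0 n).eval z ≠ 0 := q0_ne_on_E n z hz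
    rw [norm_div, div_le_iff₀ (norm_pos_iff.mpr hq0)]
    rw [p0_eval, q0_eval, norm_mul, norm_pow, norm_pow, norm_c0]
    calc (2 - Real.sqrt 3) ^ n * ‖z + ac‖ ^ n
        ≤ (2 - Real.sqrt 3) ^ n * ((2 - Real.sqrt 3) * ‖z - ac‖) ^ n := by
          apply mul_le_mul_of_nonneg_left _ (pow_nonneg rho_pos.le n)
          exact pow_le_pow_left₀ (norm_nonneg _) (hE1 hz) n
      _ = ((2 - Real.sqrt 3) / (2 + Real.sqrt 3)) ^ n * ‖z - ac‖ ^ n := by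
          rw [key_div, mul_pow, mul_pow]
          ring

end ZoloAux

/-- For `E` and `F` the closed disks of radius `1/2` centered at `-1` and `+1`, the minimal
value of the third Zolotarev problem is `σ_n = ((2-√3)/(2+√3))ⁿ`, attained by a scalar
multiple of `r(z) = ((z + √3/2)/(z - √3/2))ⁿ`. -/
theorem zoloSigma_two_disks (n : ℕ) (hn : 1 ≤ n)
    (E F : Set ℂ)
    (hE : E = Metric.closedBall (-1 : ℂ) (1 / 2))
    (hF : F = Metric.closedBall (1 : ℂ) (1 / 2)) :
    zoloSigma n E F = ((2 - Real.sqrt 3) / (2 + Real.sqrt 3)) ^ n ∧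
    ∃ (c : ℂ) (p q : Polynomial ℂ), c ≠ 0 ∧
      p.degree ≤ n ∧ q.degree ≤ n ∧
      (∀ z ∈ E, q.eval z ≠ 0) ∧ (∀ z ∈ F, ‖q.eval z‖ ≤ ‖p.eval z‖) ∧
      (∀ z : ℂ, z ≠ (Real.sqrt 3 / 2 : ℝ) → p.eval z / q.eval z =
        c * ((z + (Real.sqrt 3 / 2 : ℝ)) / (z - (Real.sqrt 3 / 2 : ℝ))) ^ n) ∧
      sSup ((fun z => ‖p.eval z / q.eval z‖) '' E) =
        ((2 - Real.sqrt 3) / (2 + Real.sqrt 3)) ^ n := by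
  subst hE hF
  constructor
  · unfold zoloSigma
    set S := {s : ℝ | ∃ p q : Polynomial ℂ, p.degree ≤ (n:WithBot ℕ) ∧ q.degree ≤ (n:WithBot ℕ) ∧
      (∀ z ∈ Metric.closedBall (-1:ℂ) (1/2), q.eval z ≠ 0) ∧
      (∀ z ∈ Metric.closedBall (1:ℂ) (1/2), ‖q.eval z‖ ≤ ‖p.eval z‖) ∧
      s = sSup ((fun z => ‖p.eval z / q.eval z‖) '' Metric.closedBall (-1:ℂ) (1/2))} with hS
    have hmem : ((2 - Real.sqrt 3) / (2 + Real.sqrt 3)) ^ n ∈ S :=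
      ⟨ZoloAux.p0 n, ZoloAux.q0 n, ZoloAux.p0_deg n, ZoloAux.q0_deg n,
        ZoloAux.q0_ne_on_E n, ZoloAux.pq0_F n, (ZoloAux.sup_val n).symm⟩
    have hlb : ∀ x ∈ S, ((2 - Real.sqrt 3) / (2 + Real.sqrt 3)) ^ n ≤ x := by
      rintro x ⟨p, q, hpd, hqd, h0, hFc, rfl⟩
      have hkey : ((2 - Real.sqrt 3) / (2 + Real.sqrt 3)) ^ n = (2 - Real.sqrt 3) ^ (2*n) := by
        rw [ZoloAux.key_div, two_mul, pow_add, mul_pow]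
      rw [hkey]
      exact ZoloAux.lower_bound n p q (natDegree_le_iff_degree_le.mpr hpd)
        (natDegree_le_iff_degree_le.mpr hqd) h0 hFc
    exact le_antisymm (csInf_le ⟨_, fun x hx => hlb x hx⟩ hmem) (le_csInf ⟨_, hmem⟩ hlb)
  · refine ⟨(((2 - Real.sqrt 3) ^ n : ℝ) : ℂ), ZoloAux.p0 n, ZoloAux.q0 n, ?_, ZoloAux.p0_deg n,
      ZoloAux.q0_deg n, ZoloAux.q0_ne_on_E n, ZoloAux.pq0_F n, ?_, ZoloAux.sup_val n⟩
    · exact Complex.ofReal_ne_zero.mpr (pow_ne_zero _ (ne_of_gt ZoloAux.rho_pos))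
    · intro z hz
      rw [ZoloAux.p0_eval, ZoloAux.q0_eval, mul_div_assoc, ← div_pow]
end

section
/- Let a = 79/40 + √((79/40)² − 1). Then a > 1, the pair {a, 1/a} are inverse points with respect to both the unit circle and the circle |z − 1/5| = 1/2 (i.e., a·(1/a) = 1 and (a − 1/5)·(1/a − 1/5) = 1/4), and the Möbius transformation m(z) = (z − 1/a)/(z − a) satisfies |m(z)| = 1/a for every z with |z| = 1 and |m(z)| = 1/(2(a − 1/5)) for every z with |z − 1/5| = 1/2. -/
/-- Inverse-point lemma: if `p, q` are real inverse points with respect to the circle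
of center `c` and radius `r` (i.e. `(p-c)(q-c) = r²`) with `p` outside the circle, then
`|(z-q)/(z-p)| = r/(p-c)` for every `z` on the circle. -/
lemma ratio_norm_on_circle (z : ℂ) (c p q r : ℝ) (hr : 0 < r)
    (hP : r < p - c) (hpq : (p - c) * (q - c) = r ^ 2)
    (hz : ‖z - (c : ℝ)‖ = r) :
    ‖(z - (q : ℝ)) / (z - (p : ℝ))‖ = r / (p - c) := by
  have hns : ∀ u : ℝ, ‖z - (u : ℝ)‖ ^ 2 = (z.re - u) ^ 2 + z.im ^ 2 := by
    intro u
    rw [Complex.sq_norm, Complex.normSq_apply]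
    simp [Complex.sub_re, Complex.sub_im]
    ring
  have hz2 : (z.re - c) ^ 2 + z.im ^ 2 = r ^ 2 := by
    rw [← hns c, hz]
  have hzp : z - (p : ℝ) ≠ 0 := by
    intro h
    have hre : z.re - p = 0 := by
      have := congrArg Complex.re h
      simpa [Complex.sub_re] using this
    have him : z.im = 0 := by
      have := congrArg Complex.im h
      simpa [Complex.sub_im] using this
    rw [him] at hz2
    nlinarith
  have hnp : ‖z - (p : ℝ)‖ ≠ 0 := norm_ne_zero_iff.mpr hzp
  have hnq2 := hns q
  have hnp2 := hns p
  have hPpos : (0 : ℝ) < p - c := lt_trans hr hP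
  have key : ‖z - (q : ℝ)‖ ^ 2 = (r / (p - c) * ‖z - (p : ℝ)‖) ^ 2 := by
    rw [mul_pow, hnq2, hnp2, div_pow, div_mul_eq_mul_div, eq_div_iff (by positivity)]
    nlinarith [hz2, hpq]
  have := sq_eq_sq₀ (norm_nonneg (z - (q : ℂ))) (by positivity) |>.mp key
  rw [norm_div, this, mul_div_assoc, div_self hnp, mul_one]

/-- With `a = 79/40 + √((79/40)² - 1)`, the pair `{a, 1/a}` are common inverse points of
the unit circle and of the circle `|z - 1/5| = 1/2`, and the Möbius transformation
`m(z) = (z - 1/a)/(z - a)` has constant modulus `1/a` on the unit circle and constant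
modulus `1/(2(a - 1/5))` on the circle `|z - 1/5| = 1/2`. -/
theorem mobius_disk_in_disk (a : ℝ)
    (ha : a = 79 / 40 + Real.sqrt ((79 / 40) ^ 2 - 1))
    (m : ℂ → ℂ)
    (hm : ∀ z, m z = (z - (1 / a : ℝ)) / (z - (a : ℝ))) :
    1 < a ∧
    a * (1 / a) = 1 ∧
    (a - 1 / 5) * (1 / a - 1 / 5) = 1 / 4 ∧
    (∀ z : ℂ, ‖z‖ = 1 → ‖m z‖ = 1 / a) ∧
    (∀ z : ℂ, ‖z - (1 / 5 : ℝ)‖ = 1 / 2 → ‖m z‖ = 1 / (2 * (a - 1 / 5))) := by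
  have hs0 : (0 : ℝ) ≤ (79 / 40) ^ 2 - 1 := by norm_num
  have hs : Real.sqrt ((79 / 40) ^ 2 - 1) ^ 2 = (79 / 40) ^ 2 - 1 := Real.sq_sqrt hs0
  have hsnn : 0 ≤ Real.sqrt ((79 / 40) ^ 2 - 1) := Real.sqrt_nonneg _
  have ha1 : 1 < a := by rw [ha]; nlinarith
  have ha0 : a ≠ 0 := by positivity
  have hquad : a ^ 2 + 1 = (79 / 20) * a := by rw [ha]; nlinarith
  have hsum : a + 1 / a = 79 / 20 := by
    field_simp
    nlinarith
  have hinv : a * (1 / a) = 1 := by field_simp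
  have hinv2 : (a - 1 / 5) * (1 / a - 1 / 5) = 1 / 4 := by
    have : (a - 1 / 5) * (1 / a - 1 / 5) = a * (1 / a) - (a + 1 / a) / 5 + 1 / 25 := by ring
    rw [this, hinv, hsum]; norm_num
  refine ⟨ha1, hinv, hinv2, ?_, ?_⟩
  · intro z hzn
    rw [hm z]
    have := ratio_norm_on_circle z 0 a (1 / a) 1 one_pos
      (by linarith) (by simpa using hinv) (by simpa using hzn)
    simpa using this
  · intro z hzn
    rw [hm z]
    have hP : (1 : ℝ) / 2 < a - 1 / 5 := by linarith
    have := ratio_norm_on_circle z (1 / 5) a (1 / a) (1 / 2) (by norm_num)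
      hP (by rw [hinv2]; norm_num) (by norm_num at hzn ⊢; exact hzn)
    rw [this, div_div]
end

section
/- Let A be an m×m complex matrix and B an n×n complex matrix whose spectra are disjoint. Then for every m×n complex matrix Y the Sylvester equation A X − X B = Y has a unique m×n solution X; equivalently, the linear map X ↦ A X − X B on m×n complex matrices is bijective. -/
open Polynomial Matrix

lemma sylv_charpoly_eval_eq {k : ℕ} (M : Matrix (Fin k) (Fin k) ℂ) (μ : ℂ) :
    M.charpoly.eval μ = (algebraMap ℂ (Matrix (Fin k) (Fin k) ℂ) μ - M).det := by
  rw [Matrix.charpoly, _root_.eval_det, matPolyEquiv_charmatrix]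
  congr 1
  ext i j
  simp [Matrix.scalar_apply, Algebra.algebraMap_eq_smul_one, Matrix.smul_apply,
    Matrix.one_apply, Matrix.diagonal_apply]

lemma sylv_root_charpoly_mem_spectrum {k : ℕ} (M : Matrix (Fin k) (Fin k) ℂ) (μ : ℂ)
    (h : M.charpoly.eval μ = 0) : μ ∈ spectrum ℂ M := by
  rw [spectrum.mem_iff]
  rw [sylv_charpoly_eval_eq] at h
  rw [Matrix.isUnit_iff_isUnit_det, isUnit_iff_ne_zero]
  simpa using h

lemma sylv_pow_comm {m n : ℕ} {A : Matrix (Fin m) (Fin m) ℂ} {B : Matrix (Fin n) (Fin n) ℂ}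
    {X : Matrix (Fin m) (Fin n) ℂ} (hx : A * X = X * B) (k : ℕ) :
    A ^ k * X = X * B ^ k := by
  induction k with
  | zero => simp
  | succ k ih =>
      rw [pow_succ, pow_succ, Matrix.mul_assoc, hx, ← Matrix.mul_assoc, ih, Matrix.mul_assoc]

lemma sylv_aeval_comm {m n : ℕ} {A : Matrix (Fin m) (Fin m) ℂ} {B : Matrix (Fin n) (Fin n) ℂ}
    {X : Matrix (Fin m) (Fin n) ℂ} (hx : A * X = X * B) (p : ℂ[X]) :
    (aeval A p) * X = X * (aeval B p) := by
  induction p using Polynomial.induction_on' with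
  | add p q hp hq =>
      rw [map_add, map_add, Matrix.add_mul, Matrix.mul_add, hp, hq]
  | monomial k c =>
      simp [aeval_monomial, Algebra.algebraMap_eq_smul_one, Matrix.smul_mul,
        Matrix.mul_smul, sylv_pow_comm hx k]

/-- If the spectra of the square complex matrices `A` (of size `m`) and `B` (of size `n`)
are disjoint, then for every `m × n` matrix `Y` the Sylvester equation `A X - X B = Y`
has a unique solution `X`; equivalently, the linear map `X ↦ A X - X B` is bijective. -/
theorem sylvester_equation_unique_solution (m n : ℕ)
    (A : Matrix (Fin m) (Fin m) ℂ) (B : Matrix (Fin n) (Fin n) ℂ)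
    (hdisj : Disjoint (spectrum ℂ A) (spectrum ℂ B)) :
    (∀ Y : Matrix (Fin m) (Fin n) ℂ, ∃! X : Matrix (Fin m) (Fin n) ℂ, A * X - X * B = Y) ∧
    Function.Bijective (fun X : Matrix (Fin m) (Fin n) ℂ => A * X - X * B) := by
  -- trivial cases
  rcases Nat.eq_zero_or_pos m with hm | hm
  · subst hm
    have : Subsingleton (Matrix (Fin 0) (Fin n) ℂ) := ⟨fun a b => by ext i; exact absurd i.2 (by omega)⟩
    refine ⟨fun Y => ⟨0, Subsingleton.elim _ _, fun _ _ => Subsingleton.elim _ _⟩,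
      fun _ _ _ => Subsingleton.elim _ _, fun Y => ⟨0, Subsingleton.elim _ _⟩⟩
  rcases Nat.eq_zero_or_pos n with hn | hn
  · subst hn
    have : Subsingleton (Matrix (Fin m) (Fin 0) ℂ) :=
      ⟨fun a b => by ext i j; exact absurd j.2 (by omega)⟩
    refine ⟨fun Y => ⟨0, Subsingleton.elim _ _, fun _ _ => Subsingleton.elim _ _⟩,
      fun _ _ _ => Subsingleton.elim _ _, fun Y => ⟨0, Subsingleton.elim _ _⟩⟩
  -- main case
  have : NeZero m := ⟨by omega⟩
  have : NeZero n := ⟨by omega⟩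
  set p := B.charpoly with hp
  -- `aeval A p` is a unit
  have hunit : IsUnit (aeval A p) := by
    by_contra h
    have h0 : (0 : ℂ) ∈ spectrum ℂ (aeval A p) := by
      rwa [spectrum.zero_mem_iff]
    have hne : (spectrum ℂ A).Nonempty :=
      spectrum.nonempty_of_isAlgClosed_of_finiteDimensional ℂ A
    rw [spectrum.map_polynomial_aeval_of_nonempty A p hne] at h0
    obtain ⟨μ, hμA, hμ0⟩ := h0
    have hμB : μ ∈ spectrum ℂ B := sylv_root_charpoly_mem_spectrum B μ hμ0
    exact Set.disjoint_left.mp hdisj hμA hμB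
  -- injectivity
  have hinj : Function.Injective (fun X : Matrix (Fin m) (Fin n) ℂ => A * X - X * B) := by
    intro X X' hXX'
    simp only at hXX'
    have h0 : A * (X - X') = (X - X') * B := by
      rw [Matrix.mul_sub, Matrix.sub_mul]
      exact sub_eq_sub_iff_sub_eq_sub.mp hXX'
    have hcomm := sylv_aeval_comm h0 p
    rw [show (aeval B) p = 0 from Matrix.aeval_self_charpoly B, Matrix.mul_zero] at hcomm
    obtain ⟨u, hu⟩ := hunit
    set v : Matrix (Fin m) (Fin m) ℂ := ((u⁻¹ : (Matrix (Fin m) (Fin m) ℂ)ˣ) : Matrix (Fin m) (Fin m) ℂ) with hv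
    have hz : X - X' = 0 := by
      calc X - X' = (v * (u : Matrix (Fin m) (Fin m) ℂ)) * (X - X') := by
            rw [hv, Units.inv_mul, Matrix.one_mul]
        _ = v * ((u : Matrix (Fin m) (Fin m) ℂ) * (X - X')) := by rw [Matrix.mul_assoc]
        _ = v * (0 : Matrix (Fin m) (Fin n) ℂ) := by rw [hu, hcomm]
        _ = 0 := Matrix.mul_zero _
    exact sub_eq_zero.mp hz
  -- surjectivity via linear algebra
  let T : Matrix (Fin m) (Fin n) ℂ →ₗ[ℂ] Matrix (Fin m) (Fin n) ℂ :=
    { toFun := fun X => A * X - X * B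
      map_add' := fun X Y => by
        simp only [Matrix.mul_add, Matrix.add_mul]; abel
      map_smul' := fun c X => by
        simp [Matrix.mul_smul, Matrix.smul_mul, smul_sub] }
  have hTinj : Function.Injective T := hinj
  have hTsurj : Function.Surjective T :=
    (LinearMap.injective_iff_surjective (f := T)).mp hTinj
  refine ⟨fun Y => ?_, hinj, hTsurj⟩
  obtain ⟨X, hX⟩ := hTsurj Y
  exact ⟨X, hX, fun X' hX' => hinj (by simpa [T] using hX'.trans hX.symm)⟩
end
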